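/- arXiv:2503.13849 — 5 statements merged into one kernel-verified Lean document; each statement's English description precedes it below -/
import Mathlib

section
/- Let f : ℝⁿ → ℝⁿ be a super-linearizable polynomial vector field and let φ : ℝⁿ → ℝⁿ be a tame automorphism with inverse φ⁻¹. Then the transformed polynomial vector field h(y) = Dφ(φ⁻¹(y)) · f(φ⁻¹(y)) (the dynamics of y = φ(x) when ẋ = f(x)) is super-linearizable. -/
open Matrix MvPolynomial

/-- A map between finite-dimensional real coordinate spaces is polynomial if each
component is given by a real multivariate polynomial. -/
def IsPolyMap {n m : ℕ} (f : (Fin n → ℝ) → (Fin m → ℝ)) : Prop :=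
  ∃ P : Fin m → MvPolynomial (Fin n) ℝ, ∀ x i, f x i = MvPolynomial.eval x (P i)

/-- A vector field `f : ℝⁿ → ℝⁿ` is super-linearizable if there are `k ∈ ℕ`, a matrix
`A ∈ ℝ^{(n+k)×(n+k)}` and a polynomial map `p : ℝⁿ → ℝᵏ` such that every solution of
`ẋ = f(x)` starting at `x₀` is, for `t ≥ 0`, the projection on the first `n` coordinates
of `t ↦ exp(tA)·(x₀, p(x₀))`. -/
def IsSuperLinearizable {n : ℕ} (f : (Fin n → ℝ) → (Fin n → ℝ)) : Prop :=
  ∃ (k : ℕ) (A : Matrix (Fin (n + k)) (Fin (n + k)) ℝ)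
    (p : (Fin n → ℝ) → (Fin k → ℝ)), IsPolyMap p ∧
    ∀ (x₀ : Fin n → ℝ) (x : ℝ → (Fin n → ℝ)),
      x 0 = x₀ →
      (∀ t : ℝ, 0 ≤ t → HasDerivAt x (f (x t)) t) →
      ∀ t : ℝ, 0 ≤ t → ∀ i : Fin n,
        (NormedSpace.exp (t • A)).mulVec (Fin.append x₀ (p x₀)) (Fin.castAdd k i) = x t i

/-- An elementary transformation of `ℝⁿ`: it adds to the last coordinate a polynomial `g`
of degree greater than `1` depending only on the first `n-1` coordinates. -/
def IsElementaryMap {n : ℕ} (φ : (Fin n → ℝ) → (Fin n → ℝ)) : Prop :=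
  ∃ g : MvPolynomial (Fin n) ℝ, 1 < g.totalDegree ∧
    (∀ i : Fin n, (i : ℕ) + 1 = n → i ∉ g.vars) ∧
    ∀ x j, φ x j = if (j : ℕ) + 1 = n then x j + MvPolynomial.eval x g else x j

/-- An affine automorphism of `ℝⁿ`: `x ↦ Ax + b` with `A` invertible. -/
def IsAffineAut {n : ℕ} (φ : (Fin n → ℝ) → (Fin n → ℝ)) : Prop :=
  ∃ (A : Matrix (Fin n) (Fin n) ℝ) (b : Fin n → ℝ), IsUnit A.det ∧
    ∀ x, φ x = A.mulVec x + b

/-- A tame automorphism: a finite composition of affine and elementary transformations. -/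
def IsTame {n : ℕ} (φ : (Fin n → ℝ) → (Fin n → ℝ)) : Prop :=
  ∃ L : List ((Fin n → ℝ) → (Fin n → ℝ)),
    (∀ ψ ∈ L, IsAffineAut ψ ∨ IsElementaryMap ψ) ∧ φ = L.foldr (· ∘ ·) id


section SuperLinHelpers

noncomputable section

/-- component extraction for pi-valued HasDerivAt -/
lemma hasDerivAt_component {N : ℕ} {v : ℝ → Fin N → ℝ} {v' : Fin N → ℝ} {t : ℝ}
    (h : HasDerivAt v v' t) (i : Fin N) :
    HasDerivAt (fun s => v s i) (v' i) t := by
  have := (ContinuousLinearMap.proj (R := ℝ) (φ := fun _ : Fin N => ℝ) i).hasFDerivAt.comp_hasDerivAt t h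
  exact this

/-- componentwise to pi-valued HasDerivAt -/
lemma hasDerivAt_pi_of {N : ℕ} {v : ℝ → Fin N → ℝ} {v' : Fin N → ℝ} {t : ℝ}
    (h : ∀ i, HasDerivAt (fun s => v s i) (v' i) t) :
    HasDerivAt v v' t := by
  have : HasFDerivAt v ((1 : ℝ →L[ℝ] ℝ).smulRight v') t := by
    apply hasFDerivAt_pi''
    intro i
    have heq : (ContinuousLinearMap.proj (R := ℝ) (φ := fun _ : Fin N => ℝ) i).comp
        ((1 : ℝ →L[ℝ] ℝ).smulRight v') = (1 : ℝ →L[ℝ] ℝ).smulRight (v' i) := by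
      ext; simp
    rw [heq]
    exact (h i).hasFDerivAt
  simpa using this.hasDerivAt

lemma mvpoly_differentiable {n : ℕ} (P : MvPolynomial (Fin n) ℝ) :
    Differentiable ℝ (fun x : Fin n → ℝ => eval x P) := by
  induction P using MvPolynomial.induction_on with
  | C a => simp only [eval_C]; exact differentiable_const a
  | add p q hp hq => simp only [map_add]; exact hp.add hq
  | mul_X p i hp =>
      simp only [_root_.map_mul, eval_X]
      exact hp.mul ((ContinuousLinearMap.proj (R := ℝ) (φ := fun _ : Fin n => ℝ) i).differentiable)

lemma IsPolyMapAux.differentiable {n m : ℕ} {g : (Fin n → ℝ) → (Fin m → ℝ)}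
    (hg : ∃ P : Fin m → MvPolynomial (Fin n) ℝ, ∀ x i, g x i = eval x (P i)) :
    Differentiable ℝ g := by
  obtain ⟨P, hP⟩ := hg
  have : g = fun x i => eval x (P i) := by funext x i; exact hP x i
  rw [this]
  exact differentiable_pi.mpr fun i => mvpoly_differentiable (P i)


/-- entrywise derivative of matrix exponential -/
lemma expEntryDeriv {N : ℕ} (B : Matrix (Fin N) (Fin N) ℝ) (t : ℝ) (i j : Fin N) :
    HasDerivAt (fun s : ℝ => NormedSpace.exp (s • B) i j)
      ((B * NormedSpace.exp (t • B)) i j) t := by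
  letI : SeminormedRing (Matrix (Fin N) (Fin N) ℝ) := Matrix.linftyOpSemiNormedRing
  letI : NormedRing (Matrix (Fin N) (Fin N) ℝ) := Matrix.linftyOpNormedRing
  letI : NormedAlgebra ℝ (Matrix (Fin N) (Fin N) ℝ) := Matrix.linftyOpNormedAlgebra
  have h := hasDerivAt_exp_smul_const' (𝕂 := ℝ) B t
  let L : Matrix (Fin N) (Fin N) ℝ →ₗ[ℝ] ℝ :=
    { toFun := fun M => M i j
      map_add' := fun M M' => rfl
      map_smul' := fun c M => rfl }
  have hL : Continuous L := L.continuous_of_finiteDimensional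
  exact (ContinuousLinearMap.hasFDerivAt ⟨L, hL⟩).comp_hasDerivAt t h

lemma exp_mul_exp_neg {N : ℕ} (A : Matrix (Fin N) (Fin N) ℝ) (t : ℝ) :
    NormedSpace.exp (t • A) * NormedSpace.exp (t • (-A)) = 1 := by
  rw [← Matrix.exp_add_of_commute]
  · rw [smul_neg, add_neg_cancel]
    exact NormedSpace.exp_zero
  · exact ((Commute.refl A).neg_right.smul_left t).smul_right t

lemma commute_exp {N : ℕ} (A B : Matrix (Fin N) (Fin N) ℝ) (hc : Commute A B) :
    A * NormedSpace.exp B = NormedSpace.exp B * A := by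
  letI : SeminormedRing (Matrix (Fin N) (Fin N) ℝ) := Matrix.linftyOpSemiNormedRing
  letI : NormedRing (Matrix (Fin N) (Fin N) ℝ) := Matrix.linftyOpNormedRing
  letI : NormedAlgebra ℝ (Matrix (Fin N) (Fin N) ℝ) := Matrix.linftyOpNormedAlgebra
  exact hc.exp_right.eq

lemma exp_zero_smul {N : ℕ} (A : Matrix (Fin N) (Fin N) ℝ) :
    NormedSpace.exp ((0:ℝ) • A) = 1 := by
  rw [zero_smul]
  exact NormedSpace.exp_zero


/-- the flow of a linear ODE solves it, componentwise -/
lemma expFlowDeriv {N : ℕ} (A : Matrix (Fin N) (Fin N) ℝ) (c : Fin N → ℝ) (t : ℝ) (i : Fin N) :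
    HasDerivAt (fun s : ℝ => (NormedSpace.exp (s • A)).mulVec c i)
      (A.mulVec ((NormedSpace.exp (t • A)).mulVec c) i) t := by
  have h2 : HasDerivAt (fun s : ℝ => ∑ j, NormedSpace.exp (s • A) i j * c j)
      (∑ j, (A * NormedSpace.exp (t • A)) i j * c j) t :=
    HasDerivAt.fun_sum fun j _ => (expEntryDeriv A t i j).mul_const (c j)
  have hval : A.mulVec ((NormedSpace.exp (t • A)).mulVec c) i
      = ∑ j, (A * NormedSpace.exp (t • A)) i j * c j := by
    rw [Matrix.mulVec_mulVec]; rfl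
  rw [hval]
  exact h2

/-- uniqueness for linear ODEs -/
lemma linODE_unique {N : ℕ} (A : Matrix (Fin N) (Fin N) ℝ) (v : ℝ → Fin N → ℝ)
    (hv : ∀ t : ℝ, HasDerivAt v (A.mulVec (v t)) t) (t : ℝ) :
    v t = (NormedSpace.exp (t • A)).mulVec (v 0) := by
  set E : ℝ → Matrix (Fin N) (Fin N) ℝ := fun s => NormedSpace.exp (s • (-A)) with hE
  set u : ℝ → Fin N → ℝ := fun s => (E s).mulVec (v s) with hu
  have hcomm : ∀ s : ℝ, A * E s = E s * A := by
    intro s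
    exact commute_exp A (s • (-A)) (((Commute.refl A).neg_right).smul_right s)
  have huderiv : ∀ j : Fin N, ∀ s : ℝ, HasDerivAt (fun r => u r j) 0 s := by
    intro j s
    have h1 : HasDerivAt (fun r => ∑ m, E r j m * v r m)
        (∑ m, (((-A) * E s) j m * v s m + E s j m * (A.mulVec (v s)) m)) s := by
      exact HasDerivAt.fun_sum
        (fun m _ => (expEntryDeriv (-A) s j m).mul (hasDerivAt_component (hv s) m))
    have hval : (∑ m, (((-A) * E s) j m * v s m + E s j m * (A.mulVec (v s)) m)) = 0 := by
      rw [Finset.sum_add_distrib]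
      have e1 : ∑ m, ((-A) * E s) j m * v s m = (((-A) * E s).mulVec (v s)) j := rfl
      have e2 : ∑ m, E s j m * (A.mulVec (v s)) m = ((E s * A).mulVec (v s)) j := by
        rw [← Matrix.mulVec_mulVec]; rfl
      rw [e1, e2, ← hcomm s]
      have : (-A) * E s = -(A * E s) := by rw [neg_mul]
      rw [this, Matrix.neg_mulVec]
      simp
    have : HasDerivAt (fun r => ∑ m, E r j m * v r m) 0 s := hval ▸ h1
    exact this
  have hconst : ∀ j, u t j = u 0 j := by
    intro j
    apply is_const_of_deriv_eq_zero (f := fun r => u r j)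
    · exact fun s => (huderiv j s).differentiableAt
    · exact fun s => (huderiv j s).deriv
  have hu0 : u 0 = v 0 := by
    rw [hu]
    simp only [E, zero_smul, NormedSpace.exp_zero, Matrix.one_mulVec]
  funext j
  calc v t j = ((NormedSpace.exp (t • A) * E t).mulVec (v t)) j := by
        rw [exp_mul_exp_neg, Matrix.one_mulVec]
    _ = (NormedSpace.exp (t • A)).mulVec ((E t).mulVec (v t)) j := by
        rw [Matrix.mulVec_mulVec]
    _ = (NormedSpace.exp (t • A)).mulVec (v 0) j := by
        have : (E t).mulVec (v t) = v 0 := by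
          have := funext fun j => (hconst j)
          rw [← hu0]; exact this
        rw [this]

lemma IsPolyMap.id {n : ℕ} : IsPolyMap (id : (Fin n → ℝ) → (Fin n → ℝ)) :=
  ⟨fun i => X i, fun x i => by simp⟩

lemma IsPolyMap.comp {n m l : ℕ} {g : (Fin m → ℝ) → (Fin l → ℝ)} {g' : (Fin n → ℝ) → (Fin m → ℝ)}
    (hg : IsPolyMap g) (hg' : IsPolyMap g') : IsPolyMap (g ∘ g') := by
  obtain ⟨P, hP⟩ := hg
  obtain ⟨Q, hQ⟩ := hg'
  refine ⟨fun i => bind₁ Q (P i), fun x i => ?_⟩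
  show g (g' x) i = _
  rw [hP (g' x) i]
  symm
  have : MvPolynomial.eval x (bind₁ Q (P i)) = aeval x (bind₁ Q (P i)) := rfl
  rw [this, aeval_bind₁]
  have h2 : (aeval (fun j => aeval x (Q j)) : MvPolynomial (Fin m) ℝ →ₐ[ℝ] ℝ) (P i)
      = MvPolynomial.eval (fun j => MvPolynomial.eval x (Q j)) (P i) := rfl
  rw [h2]
  have h3 : (fun j => MvPolynomial.eval x (Q j)) = g' x := by
    funext j; exact (hQ x j).symm
  rw [h3]

lemma eval_congr_vars {n : ℕ} {p : MvPolynomial (Fin n) ℝ} {x y : Fin n → ℝ}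
    (h : ∀ i ∈ p.vars, x i = y i) :
    MvPolynomial.eval x p = MvPolynomial.eval y p := by
  have := eval₂Hom_congr' (f₁ := RingHom.id ℝ) (f₂ := RingHom.id ℝ) (g₁ := x) (g₂ := y)
    (p₁ := p) (p₂ := p) rfl (fun i hi _ => h i hi) rfl
  exact this

/-- a tame map is polynomial with a two-sided polynomial inverse -/
lemma tame_poly_inverse {n : ℕ} {φ : (Fin n → ℝ) → (Fin n → ℝ)} (hφ : IsTame φ) :
    ∃ ψ : (Fin n → ℝ) → (Fin n → ℝ), IsPolyMap φ ∧ IsPolyMap ψ ∧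
      (∀ x, ψ (φ x) = x) ∧ (∀ x, φ (ψ x) = x) := by
  obtain ⟨L, hL, rfl⟩ := hφ
  induction L with
  | nil =>
      exact ⟨id, IsPolyMap.id, IsPolyMap.id, fun x => rfl, fun x => rfl⟩
  | cons θ L ih =>
      obtain ⟨ψL, hpL, hpLinv, hli, hri⟩ := ih (fun ψ hψ => hL ψ (List.mem_cons_of_mem θ hψ))
      have hθ := hL θ (List.mem_cons_self)
      have : ∃ θinv, IsPolyMap θ ∧ IsPolyMap θinv ∧ (∀ x, θinv (θ x) = x) ∧ (∀ x, θ (θinv x) = x) := by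
        rcases hθ with hA | hE
        · obtain ⟨A, b, hdet, hAb⟩ := hA
          refine ⟨fun y => A⁻¹.mulVec (y - b), ?_, ?_, ?_, ?_⟩
          · refine ⟨fun i => (∑ j, MvPolynomial.C (A i j) * X j) + MvPolynomial.C (b i), fun x i => ?_⟩
            rw [hAb]
            simp [Matrix.mulVec, dotProduct]
          · refine ⟨fun i => (∑ j, MvPolynomial.C (A⁻¹ i j) * X j) - MvPolynomial.C ((A⁻¹.mulVec b) i), fun x i => ?_⟩
            simp [Matrix.mulVec, dotProduct, Finset.sum_sub_distrib, sub_mul, Finset.mul_sum]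
            ring_nf
            simp [mul_comm]
          · intro x
            rw [hAb]
            simp only [add_sub_cancel_right]
            rw [Matrix.mulVec_mulVec, Matrix.nonsing_inv_mul A hdet, Matrix.one_mulVec]
          · intro y
            rw [hAb, Matrix.mulVec_mulVec, Matrix.mul_nonsing_inv A hdet, Matrix.one_mulVec]
            simp
        · obtain ⟨g, _, hvars, hgdef⟩ := hE
          have keyeval : ∀ x : Fin n → ℝ, ∀ c : ℝ,
              MvPolynomial.eval (fun j : Fin n => if (j : ℕ) + 1 = n then x j + c else x j) g
                = MvPolynomial.eval x g := by
            intro x c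
            apply eval_congr_vars
            intro i hi
            have hni : ¬ ((i : ℕ) + 1 = n) := fun hc => hvars i hc hi
            simp [hni]
          refine ⟨fun y j => if (j : ℕ) + 1 = n then y j - MvPolynomial.eval y g else y j, ?_, ?_, ?_, ?_⟩
          · refine ⟨fun j => if (j : ℕ) + 1 = n then X j + g else X j, fun x j => ?_⟩
            rw [hgdef]
            by_cases hj : (j : ℕ) + 1 = n <;> simp [hj]
          · refine ⟨fun j => if (j : ℕ) + 1 = n then X j - g else X j, fun x j => ?_⟩
            by_cases hj : (j : ℕ) + 1 = n <;> simp [hj]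
          · intro x
            funext j
            have hθx : θ x = fun j' : Fin n => if (j' : ℕ) + 1 = n then x j' + MvPolynomial.eval x g else x j' := by
              funext j'; exact hgdef x j'
            have h2 : MvPolynomial.eval (θ x) g = MvPolynomial.eval x g := by
              rw [hθx]; exact keyeval x _
            show (if (j : ℕ) + 1 = n then θ x j - MvPolynomial.eval (θ x) g else θ x j) = x j
            by_cases hj : (j : ℕ) + 1 = n
            · rw [if_pos hj, h2, hgdef, if_pos hj]; ring
            · rw [if_neg hj, hgdef, if_neg hj]
          · intro y
            funext j
            have hθinvy : (fun j' : Fin n => if (j' : ℕ) + 1 = n then y j' - MvPolynomial.eval y g else y j')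
                = fun j' : Fin n => if (j' : ℕ) + 1 = n then y j' + (-(MvPolynomial.eval y g)) else y j' := by
              funext j'; by_cases hj' : (j' : ℕ) + 1 = n <;> simp [hj', sub_eq_add_neg]
            have h2 : MvPolynomial.eval
                (fun j' : Fin n => if (j' : ℕ) + 1 = n then y j' - MvPolynomial.eval y g else y j') g
                = MvPolynomial.eval y g := by
              rw [hθinvy]; exact keyeval y _
            rw [hgdef]
            show (if (j : ℕ) + 1 = n
                then (if (j : ℕ) + 1 = n then y j - MvPolynomial.eval y g else y j) +
                  MvPolynomial.eval
                    (fun j' : Fin n => if (j' : ℕ) + 1 = n then y j' - MvPolynomial.eval y g else y j') g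
                else (if (j : ℕ) + 1 = n then y j - MvPolynomial.eval y g else y j)) = y j
            by_cases hj : (j : ℕ) + 1 = n
            · rw [if_pos hj, if_pos hj, h2]; ring
            · rw [if_neg hj, if_neg hj]
      obtain ⟨θinv, hθp, hθinvp, hθli, hθri⟩ := this
      refine ⟨ψL ∘ θinv, hθp.comp hpL, hpLinv.comp hθinvp, ?_, ?_⟩
      · intro x
        simp only [List.foldr_cons, Function.comp_apply]
        rw [hθli, hli]
      · intro x
        simp only [List.foldr_cons, Function.comp_apply]
        rw [hri, hθri]

lemma prod_toMultiset_map {α : Type*} (f : α →₀ ℕ) (u : α → ℝ) :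
    (f.toMultiset.map u).prod = f.prod fun a n => u a ^ n := by
  classical
  refine f.induction ?_ ?_
  · simp
  · intro a n f _ _ ih
    rw [Finsupp.toMultiset_add, Multiset.map_add, Multiset.prod_add, ih, Finsupp.toMultiset_single,
      Finsupp.prod_add_index' (fun x => pow_zero (u x)) (fun x e1 e2 => pow_add (u x) e1 e2),
      Finsupp.prod_single_index (h := fun x e => u x ^ e) (pow_zero (u a)),
      Multiset.map_nsmul, Multiset.prod_nsmul, Multiset.map_singleton, Multiset.prod_singleton]

lemma mono_beta {N d : ℕ} (m : Fin (N + 1) →₀ ℕ) (hm : (m.sum fun _ e => e) ≤ d) :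
    ∃ β : Fin d → Fin (N + 1), ∀ u : Fin (N + 1) → ℝ, u (Fin.last N) = 1 →
      (∏ r : Fin d, u (β r)) = m.prod fun j e => u j ^ e := by
  classical
  set m' : Fin (N + 1) →₀ ℕ := m + Finsupp.single (Fin.last N) (d - m.sum fun _ e => e) with hm'
  have hsum : (m'.sum fun _ e => e) = d := by
    rw [hm', Finsupp.sum_add_index' (fun _ => rfl) (fun _ _ _ => rfl),
      Finsupp.sum_single_index rfl]
    omega
  have hcard : Multiset.card m'.toMultiset = d := by
    rw [Finsupp.card_toMultiset]
    exact hsum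
  set l : List (Fin (N + 1)) := m'.toMultiset.toList with hl
  have hlen : l.length = d := by
    rw [hl, Multiset.length_toList, hcard]
  refine ⟨fun r => l.get (Fin.cast hlen.symm r), fun u hu => ?_⟩
  have h1 : (∏ r : Fin d, u (l.get (Fin.cast hlen.symm r))) = ∏ r : Fin l.length, u (l.get r) :=
    Fintype.prod_equiv (finCongr hlen.symm) _ _ (fun r => rfl)
  have h2 : (∏ r : Fin l.length, u (l.get r)) = (l.map u).prod := by
    conv_rhs => rw [← List.ofFn_get l]
    rw [List.map_ofFn, List.prod_ofFn]
    rfl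
  have h3 : (l.map u).prod = (m'.toMultiset.map u).prod := by
    conv_rhs => rw [← Multiset.coe_toList (Finsupp.toMultiset m')]
    rw [Multiset.map_coe, Multiset.prod_coe, hl]
  have h4 : (m'.toMultiset.map u).prod = m'.prod fun j e => u j ^ e := prod_toMultiset_map m' u
  have h5 : m'.prod (fun j e => u j ^ e) = (m.prod fun j e => u j ^ e) *
      (u (Fin.last N)) ^ (d - m.sum fun _ e => e) := by
    rw [hm', Finsupp.prod_add_index' (fun a => pow_zero (u a)) (fun a e1 e2 => pow_add (u a) e1 e2),
      Finsupp.prod_single_index (h := fun x e => u x ^ e) (pow_zero _)]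
  rw [h1, h2, h3, h4, h5, hu, one_pow, mul_one]


/-- a polynomial of total degree ≤ d is a linear combination of d-fold products of
coordinates, given that the last coordinate equals 1 -/
lemma poly_linear {N d : ℕ} (Q : MvPolynomial (Fin (N + 1)) ℝ) (hQ : Q.totalDegree ≤ d) :
    ∃ c : (Fin d → Fin (N + 1)) → ℝ, ∀ u : Fin (N + 1) → ℝ, u (Fin.last N) = 1 →
      MvPolynomial.eval u Q = ∑ β : Fin d → Fin (N + 1), c β * ∏ r, u (β r) := by
  classical
  have hβ : ∀ m ∈ Q.support, ∃ β : Fin d → Fin (N + 1), ∀ u : Fin (N + 1) → ℝ,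
      u (Fin.last N) = 1 → (∏ r : Fin d, u (β r)) = m.prod fun j e => u j ^ e := by
    intro m hm
    exact mono_beta m ((MvPolynomial.le_totalDegree hm).trans hQ)
  choose B hB using hβ
  refine ⟨fun β => ∑ m ∈ Q.support.attach, if β = B m.1 m.2 then Q.coeff m.1 else 0, fun u hu => ?_⟩
  have step : (∑ β : Fin d → Fin (N + 1),
        (∑ m ∈ Q.support.attach, if β = B m.1 m.2 then Q.coeff m.1 else 0) * ∏ r, u (β r))
      = ∑ m ∈ Q.support, Q.coeff m * (m.prod fun j e => u j ^ e) := by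
    calc (∑ β : Fin d → Fin (N + 1),
          (∑ m ∈ Q.support.attach, if β = B m.1 m.2 then Q.coeff m.1 else 0) * ∏ r, u (β r))
        = ∑ β : Fin d → Fin (N + 1), ∑ m ∈ Q.support.attach,
            (if β = B m.1 m.2 then Q.coeff m.1 * ∏ r, u (β r) else 0) := by
          refine Finset.sum_congr rfl fun β _ => ?_
          rw [Finset.sum_mul]
          exact Finset.sum_congr rfl fun m _ => by rw [ite_mul, zero_mul]
      _ = ∑ m ∈ Q.support.attach, ∑ β : Fin d → Fin (N + 1),
            (if β = B m.1 m.2 then Q.coeff m.1 * ∏ r, u (β r) else 0) := Finset.sum_comm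
      _ = ∑ m ∈ Q.support.attach, Q.coeff m.1 * ∏ r, u (B m.1 m.2 r) := by
          refine Finset.sum_congr rfl fun m _ => ?_
          rw [Finset.sum_ite_eq' Finset.univ (B m.1 m.2)
            (fun β => Q.coeff m.1 * ∏ r, u (β r))]
          simp
      _ = ∑ m ∈ Q.support.attach, Q.coeff m.1 * (m.1.prod fun j e => u j ^ e) :=
          Finset.sum_congr rfl fun m _ => by rw [hB m.1 m.2 u hu]
      _ = ∑ m ∈ Q.support, Q.coeff m * (m.prod fun j e => u j ^ e) :=
          Finset.sum_attach Q.support fun m => Q.coeff m * (m.prod fun j e => u j ^ e)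
  rw [step, MvPolynomial.eval_eq]
  rfl

end

end SuperLinHelpers

/-- If `f` is a super-linearizable polynomial vector field
 and `φ` is a tame automorphism
with inverse `φinv`, then `h(y) = Dφ(φ⁻¹(y)) · f(φ⁻¹(y))` is super-linearizable. -/
theorem superlinearizable_of_tame {n : ℕ}
    (f φ φinv h : (Fin n → ℝ) → (Fin n → ℝ))
    (hfpoly : IsPolyMap f) (hfsl : IsSuperLinearizable f)
    (hφ : IsTame φ)
    (hinv : Function.LeftInverse φinv φ) (hinv' : Function.RightInverse φinv φ)
    (hh : ∀ y, h y = fderiv ℝ φ (φinv y) (f (φinv y))) :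
    IsSuperLinearizable h := by
  classical
  obtain ⟨k, M, p, hp, hM⟩ := hfsl
  obtain ⟨ψ, hφpoly, hψpoly, hψφ, hφψ⟩ := tame_poly_inverse hφ
  have hφinv_eq : φinv = ψ := by
    funext y
    conv_lhs => rw [← hφψ y]
    rw [hinv (ψ y)]
  have hφinvpoly : IsPolyMap φinv := hφinv_eq ▸ hψpoly
  obtain ⟨Pφ, hPφ⟩ := hφpoly
  set d := Finset.univ.sup (fun i : Fin n => (Pφ i).totalDegree) with hd
  set K := Fintype.card (Fin d → Fin ((n + k) + 1)) with hK
  set e : Fin K ≃ (Fin d → Fin ((n + k) + 1)) := (Fintype.equivFin (Fin d → Fin ((n + k) + 1))).symm with he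
  set Mt : Matrix (Fin ((n + k) + 1)) (Fin ((n + k) + 1)) ℝ := fun i j =>
    if hi : (i : ℕ) < (n + k) then (if hj : (j : ℕ) < (n + k) then M ⟨i, hi⟩ ⟨j, hj⟩ else 0) else 0 with hMt
  set Nt : Matrix (Fin d → Fin ((n + k) + 1)) (Fin d → Fin ((n + k) + 1)) ℝ := fun a b =>
    ∑ r : Fin d, ∑ j : Fin ((n + k) + 1), if b = Function.update a r j then Mt (a r) j else 0 with hNt
  have hle : n ≤ (n + k) + 1 := by omega
  have hQtd : ∀ i : Fin n, (rename (Fin.castLE hle) (Pφ i)).totalDegree ≤ d := fun i =>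
    le_trans (MvPolynomial.totalDegree_rename_le _ _) (Finset.le_sup (f := fun i : Fin n => (Pφ i).totalDegree) (Finset.mem_univ i))
  choose c hc using fun i : Fin n => poly_linear _ (hQtd i)
  -- the initial lifted state as a function of y₀
  set z0map : (Fin n → ℝ) → Fin ((n + k) + 1) → ℝ := fun y i =>
    if hi : (i : ℕ) < (n + k) then Fin.append (φinv y) (p (φinv y)) ⟨(i : ℕ), hi⟩ else 1 with hz0map
  set p' : (Fin n → ℝ) → Fin K → ℝ := fun y b => ∏ r : Fin d, z0map y (e b r) with hp'
  -- p' is polynomial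
  have hp'poly : IsPolyMap p' := by
    obtain ⟨Pinv, hPinv⟩ := hφinvpoly
    obtain ⟨Pp, hPp⟩ := hp.comp ⟨Pinv, hPinv⟩
    set cp : Fin ((n + k) + 1) → MvPolynomial (Fin n) ℝ := fun i =>
      if hi : (i : ℕ) < (n + k) then
        (if hi2 : (i : ℕ) < n then Pinv ⟨(i : ℕ), hi2⟩
         else Pp ⟨(i : ℕ) - n, by omega⟩)
      else 1 with hcp
    have hcpeval : ∀ y i, z0map y i = MvPolynomial.eval y (cp i) := by
      intro y i
      simp only [hz0map, hcp]
      by_cases hi : (i : ℕ) < (n + k)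
      · rw [dif_pos hi, dif_pos hi]
        by_cases hi2 : (i : ℕ) < n
        · rw [dif_pos hi2]
          have hidx : (⟨(i : ℕ), hi⟩ : Fin (n + k)) = Fin.castAdd k ⟨(i : ℕ), hi2⟩ := rfl
          rw [hidx, Fin.append_left]
          exact hPinv y _
        · rw [dif_neg hi2]
          have hidx : (⟨(i : ℕ), hi⟩ : Fin (n + k)) = Fin.natAdd n ⟨(i : ℕ) - n, by omega⟩ :=
            Fin.ext (by simp; omega)
          rw [hidx, Fin.append_right]
          exact hPp y _
      · rw [dif_neg hi, dif_neg hi]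
        simp
    refine ⟨fun b => ∏ r : Fin d, cp (e b r), fun y b => ?_⟩
    rw [hp']
    rw [map_prod]
    exact Finset.prod_congr rfl fun r _ => hcpeval y (e b r)
  -- the big matrix
  set CN : Fin n → (Fin d → Fin ((n + k) + 1)) → ℝ := fun i b =>
    ∑ a : Fin d → Fin ((n + k) + 1), c i a * Nt a b with hCN
  set A' : Matrix (Fin (n + K)) (Fin (n + K)) ℝ := Matrix.of fun i j =>
    Fin.addCases (motive := fun _ => ℝ)
      (fun i1 => Fin.addCases (motive := fun _ => ℝ) (fun _ => 0) (fun b => CN i1 (e b)) j)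
      (fun a => Fin.addCases (motive := fun _ => ℝ) (fun _ => 0) (fun b => Nt (e a) (e b)) j)
      i with hA'
  refine ⟨K, A', p', hp'poly, ?_⟩
  intro y₀ y hy0 hyD t ht i
  -- the pulled-back solution
  set x : ℝ → Fin n → ℝ := fun s => φinv (y s) with hx
  have hx0 : x 0 = φinv y₀ := by rw [hx]; simp [hy0]
  have hφdiff : Differentiable ℝ φ := IsPolyMapAux.differentiable ⟨Pφ, hPφ⟩
  have hφinvdiff : Differentiable ℝ φinv := IsPolyMapAux.differentiable hφinvpoly
  have hxy : ∀ s, φ (x s) = y s := fun s => hinv' (y s)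
  have hxD : ∀ s : ℝ, 0 ≤ s → HasDerivAt x (f (x s)) s := by
    intro s hs
    have hchain : HasDerivAt x (fderiv ℝ φinv (y s) (h (y s))) s :=
      ((hφinvdiff (y s)).hasFDerivAt).comp_hasDerivAt s (hyD s hs)
    have hid : ∀ v, fderiv ℝ φinv (φ (x s)) (fderiv ℝ φ (x s) v) = v := by
      intro v
      have hcompeq : (φinv ∘ φ) = id := funext hinv
      have hfd : fderiv ℝ (φinv ∘ φ) (x s) = (fderiv ℝ φinv (φ (x s))).comp (fderiv ℝ φ (x s)) :=
        fderiv_comp (x s) (hφinvdiff (φ (x s))) (hφdiff (x s))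
      rw [hcompeq, fderiv_id] at hfd
      have := congrArg (fun L : (Fin n → ℝ) →L[ℝ] (Fin n → ℝ) => L v) hfd
      simpa using this.symm
    have hval : fderiv ℝ φinv (y s) (h (y s)) = f (x s) := by
      rw [hh (y s)]
      show (fderiv ℝ φinv (y s)) ((fderiv ℝ φ (x s)) (f (x s))) = f (x s)
      conv_lhs => rw [← hxy s]
      exact hid (f (x s))
    exact hval ▸ hchain
  have hMx := hM (x 0) x rfl hxD
  -- lifted linear flow
  set z : ℝ → Fin (n + k) → ℝ :=
    fun s => (NormedSpace.exp (s • M)).mulVec (Fin.append (x 0) (p (x 0))) with hz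
  set zt : ℝ → Fin ((n + k) + 1) → ℝ := fun s i =>
    if hi : (i : ℕ) < (n + k) then z s ⟨(i : ℕ), hi⟩ else 1 with hzt
  have hztlast : ∀ s, zt s (Fin.last (n + k)) = 1 := by
    intro s
    rw [hzt]
    simp only
    rw [dif_neg (by simp)]
  have hztD : ∀ (s : ℝ) (i : Fin ((n + k) + 1)), HasDerivAt (fun r => zt r i) (Mt.mulVec (zt s) i) s := by
    intro s i
    by_cases hi : (i : ℕ) < (n + k)
    · have hfun : (fun r => zt r i) = fun r => z r ⟨(i : ℕ), hi⟩ := by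
        funext r; rw [hzt]; simp only; rw [dif_pos hi]
      have hval : Mt.mulVec (zt s) i = M.mulVec (z s) ⟨(i : ℕ), hi⟩ := by
        show (∑ j : Fin ((n + k) + 1), Mt i j * zt s j) = ∑ j : Fin (n + k), M ⟨(i : ℕ), hi⟩ j * z s j
        rw [Fin.sum_univ_castSucc]
        have hlastterm : Mt i (Fin.last (n + k)) * zt s (Fin.last (n + k)) = 0 := by
          rw [hMt]; simp only [Matrix.of_apply]
          rw [dif_pos hi, dif_neg (by simp)]
          ring
        rw [hlastterm, add_zero]
        refine Finset.sum_congr rfl fun j _ => ?_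
        have h1 : Mt i j.castSucc = M ⟨(i : ℕ), hi⟩ j := by
          rw [hMt]; simp only [Matrix.of_apply]
          rw [dif_pos hi, dif_pos (by simp [Fin.castSucc])]
          congr 1
        have h2 : zt s j.castSucc = z s j := by
          rw [hzt]; simp only
          rw [dif_pos (by simp [Fin.castSucc])]
          congr 1
        rw [h1, h2]
      rw [hfun, hval]
      exact expFlowDeriv M _ s _
    · have hfun : (fun r => zt r i) = fun _ => (1 : ℝ) := by
        funext r; rw [hzt]; simp only; rw [dif_neg hi]
      have hval : Mt.mulVec (zt s) i = 0 := by
        show (∑ j : Fin ((n + k) + 1), Mt i j * zt s j) = 0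
        refine Finset.sum_eq_zero fun j _ => ?_
        rw [hMt]; simp only [Matrix.of_apply]
        rw [dif_neg hi]; ring
      rw [hfun, hval]
      exact hasDerivAt_const s 1
  -- the monomial flow
  set W : ℝ → (Fin d → Fin ((n + k) + 1)) → ℝ := fun s a => ∏ r : Fin d, zt s (a r) with hW
  have hWD : ∀ (s : ℝ) (a : Fin d → Fin ((n + k) + 1)),
      HasDerivAt (fun r => W r a) (∑ b : Fin d → Fin ((n + k) + 1), Nt a b * W s b) s := by
    intro s a
    have hprod := HasDerivAt.fun_finsetProd (x := s) (u := (Finset.univ : Finset (Fin d)))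
      (f := fun r (q : ℝ) => zt q (a r)) (f' := fun r => Mt.mulVec (zt s) (a r))
      (fun r _ => hztD s (a r))
    have hWup : ∀ (r : Fin d) (j : Fin ((n + k) + 1)),
        W s (Function.update a r j) = zt s j * ∏ r' ∈ Finset.univ.erase r, zt s (a r') := by
      intro r j
      have hfun : (fun r' => zt s (Function.update a r j r'))
          = Function.update (fun r' => zt s (a r')) r (zt s j) := by
        funext r'
        by_cases hr : r' = r
        · subst hr; simp
        · simp [Function.update_of_ne hr]
      have h1 : W s (Function.update a r j)
          = ∏ r' : Fin d, Function.update (fun r'' => zt s (a r'')) r (zt s j) r' := by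
        rw [hW]
        simp only
        rw [hfun]
      rw [h1, Finset.prod_update_of_mem (Finset.mem_univ r)]
      congr 1
      rw [Finset.sdiff_singleton_eq_erase]
    have hcollapse : ∀ (r : Fin d) (j : Fin ((n + k) + 1)),
        (∑ b : Fin d → Fin ((n + k) + 1), (if b = Function.update a r j then Mt (a r) j else 0) * W s b)
          = Mt (a r) j * W s (Function.update a r j) := by
      intro r j
      rw [Finset.sum_eq_single (Function.update a r j)]
      · rw [if_pos rfl]
      · intro b _ hb; rw [if_neg hb, zero_mul]
      · intro hb; exact absurd (Finset.mem_univ _) hb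
    have hval : (∑ r : Fin d, (∏ j ∈ Finset.univ.erase r, zt s (a j)) • Mt.mulVec (zt s) (a r))
        = ∑ b : Fin d → Fin ((n + k) + 1), Nt a b * W s b := by
      calc (∑ r : Fin d, (∏ j ∈ Finset.univ.erase r, zt s (a j)) • Mt.mulVec (zt s) (a r))
          = ∑ r : Fin d, ∑ j : Fin ((n + k) + 1),
              Mt (a r) j * W s (Function.update a r j) := by
            refine Finset.sum_congr rfl fun r _ => ?_
            rw [smul_eq_mul]
            have hmv : Mt.mulVec (zt s) (a r) = ∑ j : Fin ((n + k) + 1), Mt (a r) j * zt s j := rfl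
            rw [hmv, Finset.mul_sum]
            refine Finset.sum_congr rfl fun j _ => ?_
            rw [hWup r j]
            ring
        _ = ∑ r : Fin d, ∑ j : Fin ((n + k) + 1), ∑ b : Fin d → Fin ((n + k) + 1),
              (if b = Function.update a r j then Mt (a r) j else 0) * W s b := by
            exact Finset.sum_congr rfl fun r _ =>
              Finset.sum_congr rfl fun j _ => (hcollapse r j).symm
        _ = ∑ b : Fin d → Fin ((n + k) + 1), ∑ r : Fin d, ∑ j : Fin ((n + k) + 1),
              (if b = Function.update a r j then Mt (a r) j else 0) * W s b := by
            rw [show (∑ r : Fin d, ∑ j : Fin ((n + k) + 1), ∑ b : Fin d → Fin ((n + k) + 1),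
                (if b = Function.update a r j then Mt (a r) j else 0) * W s b)
              = ∑ r : Fin d, ∑ b : Fin d → Fin ((n + k) + 1), ∑ j : Fin ((n + k) + 1),
                (if b = Function.update a r j then Mt (a r) j else 0) * W s b from
              Finset.sum_congr rfl fun r _ => Finset.sum_comm]
            exact Finset.sum_comm
        _ = ∑ b : Fin d → Fin ((n + k) + 1), Nt a b * W s b := by
            refine Finset.sum_congr rfl fun b _ => ?_
            rw [hNt]
            simp only
            rw [Finset.sum_mul]
            refine Finset.sum_congr rfl fun r _ => ?_
            rw [Finset.sum_mul]
    rw [← hval]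
    convert hprod using 1
  -- the full lifted state
  set v : ℝ → Fin (n + K) → ℝ := fun s => Fin.append
    (fun i : Fin n => ∑ a : Fin d → Fin ((n + k) + 1), c i a * W s a)
    (fun b : Fin K => W s (e b)) with hv
  have hvD : ∀ s : ℝ, HasDerivAt v (A'.mulVec (v s)) s := by
    intro s
    apply hasDerivAt_pi_of
    intro idx
    have hsplit : ∀ (idx2 : Fin (n + K)) (F : Fin (n + K) → ℝ), A'.mulVec F idx2
        = ∑ j1 : Fin n, A' idx2 (Fin.castAdd K j1) * F (Fin.castAdd K j1)
          + ∑ b : Fin K, A' idx2 (Fin.natAdd n b) * F (Fin.natAdd n b) := by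
      intro idx2 F
      show (∑ j : Fin (n + K), A' idx2 j * F j) = _
      rw [Fin.sum_univ_add]
    refine Fin.addCases (motive := fun idx => HasDerivAt (fun r => v r idx) (A'.mulVec (v s) idx) s)
      ?_ ?_ idx
    · intro i1
      have hfun : (fun r => v r (Fin.castAdd K i1))
          = fun r => ∑ a : Fin d → Fin ((n + k) + 1), c i1 a * W r a := by
        funext r
        rw [hv]
        simp only
        rw [Fin.append_left]
      have hder : HasDerivAt (fun r => ∑ a : Fin d → Fin ((n + k) + 1), c i1 a * W r a)
          (∑ a : Fin d → Fin ((n + k) + 1), c i1 a * ∑ b : Fin d → Fin ((n + k) + 1), Nt a b * W s b) s :=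
        HasDerivAt.fun_sum fun a _ => (hWD s a).const_mul (c i1 a)
      have hA'val : A'.mulVec (v s) (Fin.castAdd K i1)
          = ∑ a : Fin d → Fin ((n + k) + 1), c i1 a * ∑ b : Fin d → Fin ((n + k) + 1), Nt a b * W s b := by
        rw [hsplit]
        have h0 : ∀ j1 : Fin n, A' (Fin.castAdd K i1) (Fin.castAdd K j1) = 0 := by
          intro j1
          rw [hA']
          simp only [Matrix.of_apply]
          rw [Fin.addCases_left, Fin.addCases_left]
        have h1 : ∀ b : Fin K, A' (Fin.castAdd K i1) (Fin.natAdd n b) = CN i1 (e b) := by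
          intro b
          rw [hA']
          simp only [Matrix.of_apply]
          rw [Fin.addCases_left, Fin.addCases_right]
        have h2 : ∀ b : Fin K, v s (Fin.natAdd n b) = W s (e b) := by
          intro b
          rw [hv]
          simp only
          rw [Fin.append_right]
        calc (∑ j1 : Fin n, A' (Fin.castAdd K i1) (Fin.castAdd K j1) * v s (Fin.castAdd K j1)
              + ∑ b : Fin K, A' (Fin.castAdd K i1) (Fin.natAdd n b) * v s (Fin.natAdd n b))
            = ∑ b : Fin K, CN i1 (e b) * W s (e b) := by
              rw [Finset.sum_eq_zero fun j1 _ => by rw [h0 j1, zero_mul], zero_add]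
              exact Finset.sum_congr rfl fun b _ => by rw [h1 b, h2 b]
          _ = ∑ a' : Fin d → Fin ((n + k) + 1), CN i1 a' * W s a' :=
              Equiv.sum_comp e (fun a' => CN i1 a' * W s a')
          _ = ∑ a' : Fin d → Fin ((n + k) + 1),
                ∑ a : Fin d → Fin ((n + k) + 1), c i1 a * Nt a a' * W s a' := by
              refine Finset.sum_congr rfl fun a' _ => ?_
              rw [hCN]
              simp only
              rw [Finset.sum_mul]
          _ = ∑ a : Fin d → Fin ((n + k) + 1),
                ∑ a' : Fin d → Fin ((n + k) + 1), c i1 a * Nt a a' * W s a' := Finset.sum_comm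
          _ = ∑ a : Fin d → Fin ((n + k) + 1), c i1 a * ∑ b : Fin d → Fin ((n + k) + 1), Nt a b * W s b := by
              refine Finset.sum_congr rfl fun a _ => ?_
              rw [Finset.mul_sum]
              exact Finset.sum_congr rfl fun b _ => by ring
      rw [hfun, hA'val]
      exact hder
    · intro a1
      have hfun : (fun r => v r (Fin.natAdd n a1)) = fun r => W r (e a1) := by
        funext r
        rw [hv]
        simp only
        rw [Fin.append_right]
      have hA'val : A'.mulVec (v s) (Fin.natAdd n a1)
          = ∑ b : Fin d → Fin ((n + k) + 1), Nt (e a1) b * W s b := by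
        rw [hsplit]
        have h0 : ∀ j1 : Fin n, A' (Fin.natAdd n a1) (Fin.castAdd K j1) = 0 := by
          intro j1
          rw [hA']
          simp only [Matrix.of_apply]
          rw [Fin.addCases_right, Fin.addCases_left]
        have h1 : ∀ b : Fin K, A' (Fin.natAdd n a1) (Fin.natAdd n b) = Nt (e a1) (e b) := by
          intro b
          rw [hA']
          simp only [Matrix.of_apply]
          rw [Fin.addCases_right, Fin.addCases_right]
        have h2 : ∀ b : Fin K, v s (Fin.natAdd n b) = W s (e b) := by
          intro b
          rw [hv]
          simp only
          rw [Fin.append_right]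
        calc (∑ j1 : Fin n, A' (Fin.natAdd n a1) (Fin.castAdd K j1) * v s (Fin.castAdd K j1)
              + ∑ b : Fin K, A' (Fin.natAdd n a1) (Fin.natAdd n b) * v s (Fin.natAdd n b))
            = ∑ b : Fin K, Nt (e a1) (e b) * W s (e b) := by
              rw [Finset.sum_eq_zero fun j1 _ => by rw [h0 j1, zero_mul], zero_add]
              exact Finset.sum_congr rfl fun b _ => by rw [h1 b, h2 b]
          _ = ∑ b : Fin d → Fin ((n + k) + 1), Nt (e a1) b * W s b :=
              Equiv.sum_comp e (fun b => Nt (e a1) b * W s b)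
      rw [hfun, hA'val]
      exact hWD s (e a1)
  have huniq := linODE_unique A' v hvD
  -- identify zt 0 with z0map y₀
  have hzt0 : zt 0 = z0map y₀ := by
    funext i
    rw [hzt, hz0map]
    simp only
    by_cases hi : (i : ℕ) < (n + k)
    · rw [dif_pos hi, dif_pos hi]
      rw [hz]
      simp only
      rw [exp_zero_smul, Matrix.one_mulVec, hx0]
    · rw [dif_neg hi, dif_neg hi]
  -- identify the value of the linear combination with φ applied to z-projection
  have hlin : ∀ s : ℝ, 0 ≤ s → ∀ i : Fin n,
      (∑ a : Fin d → Fin ((n + k) + 1), c i a * W s a) = y s i := by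
    intro s hs i
    have hcomp : zt s ∘ Fin.castLE hle = x s := by
      funext j
      have hjN : ((Fin.castLE hle j : Fin ((n + k) + 1)) : ℕ) < (n + k) := by
        have : (j : ℕ) < n := j.isLt
        simp only [Fin.coe_castLE]
        omega
      show zt s (Fin.castLE hle j) = x s j
      rw [hzt]
      simp only
      rw [dif_pos hjN]
      have hidx : (⟨((Fin.castLE hle j : Fin ((n + k) + 1)) : ℕ), hjN⟩ : Fin (n + k))
          = Fin.castAdd k j := Fin.ext (by simp)
      rw [hidx]
      exact hMx s hs j
    calc (∑ a : Fin d → Fin ((n + k) + 1), c i a * W s a)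
        = MvPolynomial.eval (zt s) (rename (Fin.castLE hle) (Pφ i)) :=
          (hc i (zt s) (hztlast s)).symm
      _ = MvPolynomial.eval (zt s ∘ Fin.castLE hle) (Pφ i) := by rw [eval_rename]
      _ = MvPolynomial.eval (x s) (Pφ i) := by rw [hcomp]
      _ = φ (x s) i := (hPφ (x s) i).symm
      _ = y s i := by rw [hxy s]
  -- initial value
  have hv0 : v 0 = Fin.append y₀ (p' y₀) := by
    funext idx
    refine Fin.addCases (motive := fun idx => v 0 idx = Fin.append y₀ (p' y₀) idx) ?_ ?_ idx
    · intro i1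
      rw [hv]
      simp only
      rw [Fin.append_left, Fin.append_left]
      rw [hlin 0 le_rfl i1, hy0]
    · intro b
      rw [hv]
      simp only
      rw [Fin.append_right, Fin.append_right]
      rw [hp']
      simp only
      rw [hW]
      simp only
      rw [hzt0]
  -- conclude
  rw [← hv0, ← huniq t]
  have : v t (Fin.castAdd K i) = ∑ a : Fin d → Fin ((n + k) + 1), c i a * W t a := by
    rw [hv]
    simp only
    rw [Fin.append_left]
  rw [this, hlin t ht i]
end

section
/- Let f : ℝⁿ → ℝⁿ be a polynomial vector field satisfying the WDG condition: for every cycle i₀, i₁, …, i_m = i₀ (m ≥ 1) of indices in {1, …, n} such that each partial derivative ∂f_{i_{ℓ+1}}/∂x_{i_ℓ} is a nonzero polynomial, the product ∏_{ℓ=0}^{m−1} ∂f_{i_{ℓ+1}}/∂x_{i_ℓ} is a constant polynomial. Then f is super-linearizable. -/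
open Matrix MvPolynomial

/-- The partial derivative of `h : ℝⁿ → ℝ` with respect to the `j`-th coordinate. -/
noncomputable def pd {n : ℕ} (h : (Fin n → ℝ) → ℝ) (j : Fin n) : (Fin n → ℝ) → ℝ :=
  fun x => fderiv ℝ h x (Pi.single j 1)

/-- The WDG (weighted dependency graph) condition for a vector field `h : ℝⁿ → ℝⁿ`:
along every cycle `i₀, i₁, …, i_m = i₀` (m ≥ 1) all of whose edge weights
`∂h_{i_{ℓ+1}}/∂x_{i_ℓ}` are nonzero, the product of the edge weights is constant. -/
def SatisfiesWDG {n : ℕ} (h : (Fin n → ℝ) → (Fin n → ℝ)) : Prop :=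
  ∀ m : ℕ, 1 ≤ m → ∀ c : ℕ → Fin n, c m = c 0 →
    (∀ ℓ < m, pd (fun x => h x (c (ℓ + 1))) (c ℓ) ≠ 0) →
    ∃ r : ℝ, ∀ x : Fin n → ℝ,
      (∏ ℓ ∈ Finset.range m, pd (fun x' => h x' (c (ℓ + 1))) (c ℓ) x) = r

lemma mv_hasFDerivAt {n : ℕ} (Q : MvPolynomial (Fin n) ℝ) (x : Fin n → ℝ) :
    HasFDerivAt (fun y => eval y Q)
      (∑ j, eval x (pderiv j Q) • (ContinuousLinearMap.proj j : (Fin n → ℝ) →L[ℝ] ℝ)) x := by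
  induction Q using MvPolynomial.induction_on with
  | C a =>
      simp only [eval_C, pderiv_C, map_zero, zero_smul, Finset.sum_const_zero]
      exact hasFDerivAt_const _ _
  | add p q hp hq =>
      have e1 : (fun y : Fin n → ℝ => eval y (p + q)) = fun y => eval y p + eval y q := by
        funext y; rw [map_add]
      rw [e1]
      refine (hp.add hq).congr_fderiv (Eq.symm ?_)
      rw [← Finset.sum_add_distrib]
      exact Finset.sum_congr rfl fun j _ => by rw [map_add, map_add, add_smul]
  | mul_X p i hp =>
      have hXi : HasFDerivAt (fun y : Fin n → ℝ => y i)
          (ContinuousLinearMap.proj i : (Fin n → ℝ) →L[ℝ] ℝ) x :=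
        (ContinuousLinearMap.proj (R := ℝ) (φ := fun _ : Fin n => ℝ) i).hasFDerivAt
      have h := hp.mul hXi
      have e1 : (fun y : Fin n → ℝ => eval y (p * X i)) = fun y => eval y p * y i := by
        funext y; rw [_root_.map_mul, eval_X]
      rw [e1]
      refine h.congr_fderiv (Eq.symm ?_)
      ext v
      simp only [ContinuousLinearMap.sum_apply, ContinuousLinearMap.smul_apply,
        ContinuousLinearMap.proj_apply, ContinuousLinearMap.add_apply, smul_eq_mul]
      have : ∀ j : Fin n, eval x (pderiv j (p * X i)) * v j
          = (eval x (pderiv j p) * x i) * v j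
            + (eval x p * (if i = j then 1 else 0)) * v j := by
        intro j
        rw [pderiv_mul]
        simp only [map_add, _root_.map_mul, eval_X]
        rw [pderiv_X]
        by_cases hij : i = j
        · subst hij; simp [Pi.single_apply]; ring
        · simp [Pi.single_apply, hij, Ne.symm hij]
      rw [Finset.sum_congr rfl fun j _ => this j, Finset.sum_add_distrib, add_comm]
      congr 1
      · rw [Finset.sum_eq_single i]
        · simp
        · intro b _ hb; simp [Ne.symm hb]
        · simp
      · rw [Finset.mul_sum]
        exact Finset.sum_congr rfl fun j _ => by ring

lemma mv_hasDerivAt_comp {n : ℕ} (Q : MvPolynomial (Fin n) ℝ) (x : ℝ → Fin n → ℝ)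
    (v : Fin n → ℝ) (t : ℝ) (hx : HasDerivAt x v t) :
    HasDerivAt (fun s => eval (x s) Q) (∑ j, eval (x t) (pderiv j Q) * v j) t := by
  have h := (mv_hasFDerivAt Q (x t)).comp_hasDerivAt t hx
  refine h.congr_deriv (Eq.symm ?_)
  simp [ContinuousLinearMap.sum_apply, mul_comm]

lemma pd_eval {n : ℕ} (Q : MvPolynomial (Fin n) ℝ) (j : Fin n) :
    pd (fun y => eval y Q) j = fun y => eval y (pderiv j Q) := by
  funext y
  show fderiv ℝ (fun y => eval y Q) y (Pi.single j 1) = _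
  rw [(mv_hasFDerivAt Q y).fderiv]
  simp only [ContinuousLinearMap.sum_apply, ContinuousLinearMap.smul_apply,
    ContinuousLinearMap.proj_apply, smul_eq_mul]
  rw [Finset.sum_eq_single j]
  · simp
  · intro b _ hb; simp [Pi.single_apply, hb]
  · simp

lemma pd_eval_ne_zero {n : ℕ} (Q : MvPolynomial (Fin n) ℝ) (j : Fin n) (h : pderiv j Q ≠ 0) :
    pd (fun y => eval y Q) j ≠ 0 := by
  rw [pd_eval]
  intro hc
  exact h (MvPolynomial.funext fun y => by
    have := congrFun hc y; simpa using this)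

lemma coeff_pderiv' {n : ℕ} (j : Fin n) (Q : MvPolynomial (Fin n) ℝ) (β : Fin n →₀ ℕ) :
    coeff β (pderiv j Q) = ((β j : ℝ) + 1) * coeff (β + Finsupp.single j 1) Q := by
  induction Q using MvPolynomial.induction_on' with
  | monomial α a =>
      rw [pderiv_monomial]
      rw [coeff_monomial, coeff_monomial]
      by_cases h : α = β + Finsupp.single j 1
      · subst h
        have h1 : β + Finsupp.single j 1 - Finsupp.single j 1 = β := by
          exact add_tsub_cancel_right _ _
        rw [h1, if_pos rfl, if_pos rfl]
        have h2 : ((β + Finsupp.single j 1 : Fin n →₀ ℕ)) j = β j + 1 := by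
          rw [Finsupp.add_apply, Finsupp.single_eq_same]
        rw [h2]; push_cast; ring
      · rw [if_neg h]
        by_cases hz : α j = 0
        · have : (α j : ℝ) = 0 := by exact_mod_cast hz
          rw [mul_zero]
          split <;> simp [this, hz]
        · have hle : Finsupp.single j 1 ≤ α := by
            rw [Finsupp.single_le_iff]; omega
          have hne : ¬ (α - Finsupp.single j 1 = β) := by
            intro hc
            apply h
            rw [← hc, tsub_add_cancel_of_le hle]
          rw [if_neg hne, mul_zero]
  | add p q hp hq =>
      rw [map_add, coeff_add, coeff_add, hp, hq]; ring

lemma mem_support_add_single {n : ℕ} {j : Fin n} {Q : MvPolynomial (Fin n) ℝ} {β : Fin n →₀ ℕ}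
    (h : β ∈ (pderiv j Q).support) : β + Finsupp.single j 1 ∈ Q.support := by
  rw [MvPolynomial.mem_support_iff] at h ⊢
  intro hc
  rw [coeff_pderiv', hc, mul_zero] at h
  exact h rfl

lemma coeff_pderiv_sub {n : ℕ} {j : Fin n} {Q : MvPolynomial (Fin n) ℝ} {α : Fin n →₀ ℕ}
    (hj : α j ≠ 0) :
    coeff (α - Finsupp.single j 1) (pderiv j Q) = (α j : ℝ) * coeff α Q := by
  have hle : Finsupp.single j 1 ≤ α := by rw [Finsupp.single_le_iff]; omega
  rw [coeff_pderiv', tsub_add_cancel_of_le hle]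
  congr 1
  have : ((α - Finsupp.single j 1 : Fin n →₀ ℕ)) j = α j - 1 := by
    rw [Finsupp.tsub_apply, Finsupp.single_eq_same]
  rw [this]
  have : (α j - 1) + 1 = α j := by omega
  exact_mod_cast congrArg (Nat.cast (R := ℝ)) this

lemma pderiv_ne_zero_of_mem {n : ℕ} {j : Fin n} {Q : MvPolynomial (Fin n) ℝ} {α : Fin n →₀ ℕ}
    (hα : α ∈ Q.support) (hj : α j ≠ 0) : pderiv j Q ≠ 0 := by
  intro hc
  rw [MvPolynomial.mem_support_iff] at hα
  have := coeff_pderiv_sub (Q := Q) hj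
  rw [hc] at this
  simp only [coeff_zero] at this
  have : (α j : ℝ) * coeff α Q ≠ 0 :=
    mul_ne_zero (Nat.cast_ne_zero.mpr hj) hα
  exact this (by rw [← coeff_pderiv_sub (Q := Q) hj, hc, coeff_zero])

lemma eq_single_of_pderiv_C {n : ℕ} {j : Fin n} {Q : MvPolynomial (Fin n) ℝ} {α : Fin n →₀ ℕ}
    {c : ℝ} (hQ : pderiv j Q = C c) (hα : α ∈ Q.support) (hj : α j ≠ 0) :
    α = Finsupp.single j 1 := by
  by_contra hne
  have hle : Finsupp.single j 1 ≤ α := by rw [Finsupp.single_le_iff]; omega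
  have hβ : α - Finsupp.single j 1 ≠ 0 := by
    intro hc
    apply hne
    have := tsub_add_cancel_of_le hle
    rw [hc, zero_add] at this
    exact this.symm
  have h1 : coeff (α - Finsupp.single j 1) (pderiv j Q) = 0 := by
    rw [hQ, coeff_C, if_neg (fun h => hβ h.symm)]
  rw [coeff_pderiv_sub hj] at h1
  rw [MvPolynomial.mem_support_iff] at hα
  exact (mul_ne_zero (Nat.cast_ne_zero.mpr hj) hα) h1

def PEdge {n : ℕ} (P : Fin n → MvPolynomial (Fin n) ℝ) (j i : Fin n) : Prop :=
  pderiv j (P i) ≠ 0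

def PReach {n : ℕ} (P : Fin n → MvPolynomial (Fin n) ℝ) : Fin n → Fin n → Prop :=
  Relation.TransGen (PEdge P)

lemma reach_chain {n : ℕ} {P : Fin n → MvPolynomial (Fin n) ℝ} {j i : Fin n}
    (h : PReach P j i) :
    ∃ (m : ℕ) (c : ℕ → Fin n), 1 ≤ m ∧ c 0 = j ∧ c m = i ∧
      ∀ ℓ < m, PEdge P (c ℓ) (c (ℓ + 1)) := by
  induction h with
  | single hb =>
      rename_i b
      exact ⟨1, fun ℓ => if ℓ = 0 then j else b, le_refl 1, by simp, by simp, by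
        intro ℓ hℓ
        interval_cases ℓ
        simpa using hb⟩
  | @tail b c' hab hbc ih =>
      obtain ⟨m, c, hm, h0, hme, hedge⟩ := ih
      refine ⟨m + 1, fun ℓ => if ℓ = m + 1 then c' else c ℓ, by omega, by
        simp only [if_neg (by omega : (0:ℕ) ≠ m + 1)]; exact h0, by simp, ?_⟩
      intro ℓ hℓ
      by_cases hcase : ℓ = m
      · subst hcase
        simp only [if_neg (by omega : ℓ ≠ ℓ + 1), if_pos rfl]
        rw [hme]
        exact hbc
      · have h1 : ℓ ≠ m + 1 := by omega
        have h2 : ℓ + 1 ≠ m + 1 := by omega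
        simp only [if_neg h1, if_neg h2]
        exact hedge ℓ (by omega)

lemma mv_unit_eq_C {n : ℕ} {p : MvPolynomial (Fin n) ℝ} (h : IsUnit p) : ∃ c : ℝ, p = C c := by
  suffices hc : ∀ x z : Fin n → ℝ, eval x p = eval z p by
    refine ⟨eval 0 p, MvPolynomial.funext fun y => ?_⟩
    rw [eval_C]; exact hc y 0
  intro x z
  set φ : MvPolynomial (Fin n) ℝ →+* Polynomial ℝ :=
    (MvPolynomial.eval₂Hom (Polynomial.C : ℝ →+* Polynomial ℝ)
      (fun j => Polynomial.C (x j) + Polynomial.X * Polynomial.C (z j - x j))) with hφ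
  have keval : ∀ (t : ℝ) (q : MvPolynomial (Fin n) ℝ),
      Polynomial.eval t (φ q) = eval (fun j => x j + t * (z j - x j)) q := by
    intro t q
    induction q using MvPolynomial.induction_on with
    | C a => simp [hφ]
    | add p q hp hq => simp [map_add, hp, hq]
    | mul_X p i hp =>
        rw [_root_.map_mul, Polynomial.eval_mul, hp, _root_.map_mul, eval_X]
        congr 1
        simp [hφ]
  have hu : IsUnit (φ p) := h.map φ
  have hdeg : (φ p).degree = 0 := Polynomial.isUnit_iff_degree_eq_zero.mp hu
  have hC : φ p = Polynomial.C ((φ p).coeff 0) :=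
    Polynomial.eq_C_of_degree_le_zero (le_of_eq hdeg)
  have h0 := keval 0 p
  have h1 := keval 1 p
  rw [hC] at h0 h1
  simp only [Polynomial.eval_C] at h0 h1
  have e0 : (fun j => x j + (0:ℝ) * (z j - x j)) = x := by funext j; ring
  have e1 : (fun j => x j + (1:ℝ) * (z j - x j)) = z := by funext j; ring
  have hxz := h0.symm.trans h1
  rw [e0, e1] at hxz
  exact hxz

lemma cycle_const {n : ℕ} {P : Fin n → MvPolynomial (Fin n) ℝ}
    (hwdg' : ∀ m : ℕ, 1 ≤ m → ∀ c : ℕ → Fin n, c m = c 0 →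
      (∀ ℓ < m, pderiv (c ℓ) (P (c (ℓ + 1))) ≠ 0) →
      ∃ r : ℝ, (∏ ℓ ∈ Finset.range m, pderiv (c ℓ) (P (c (ℓ + 1)))) = C r)
    {j i : Fin n} (hedge : PEdge P j i) (hreach : PReach P i j) :
    ∃ c : ℝ, pderiv j (P i) = C c := by
  obtain ⟨m, c, hm, h0, hme, hch⟩ := reach_chain hreach
  set d : ℕ → Fin n := fun ℓ => if ℓ = 0 then j else c (ℓ - 1) with hd
  have hcyc : d (m + 1) = d 0 := by
    simp only [hd, if_neg (by omega : m + 1 ≠ 0), if_pos rfl]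
    simpa using hme
  have hedges : ∀ ℓ < m + 1, pderiv (d ℓ) (P (d (ℓ + 1))) ≠ 0 := by
    intro ℓ hℓ
    by_cases h0' : ℓ = 0
    · subst h0'
      simp only [hd, if_pos rfl, if_neg (by omega : (1:ℕ) ≠ 0)]
      simpa [h0, PEdge] using hedge
    · simp only [hd, if_neg h0', if_neg (by omega : ℓ + 1 ≠ 0)]
      have : ℓ - 1 < m := by omega
      have he := hch (ℓ - 1) this
      have : ℓ - 1 + 1 = ℓ := by omega
      rw [this] at he
      have : ℓ + 1 - 1 = ℓ := by omega
      rw [this]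
      exact he
  obtain ⟨r, hr⟩ := hwdg' (m + 1) (by omega) d hcyc hedges
  have hdvd : pderiv j (P i) ∣ C r := by
    rw [← hr]
    have h01 : pderiv (d 0) (P (d 1)) = pderiv j (P i) := by
      simp only [hd, if_pos rfl, if_neg (by omega : (1:ℕ) ≠ 0)]
      simp [h0]
    rw [← h01]
    exact Finset.dvd_prod_of_mem _ (Finset.mem_range.mpr (by omega))
  have hCr : (C r : MvPolynomial (Fin n) ℝ) ≠ 0 := by
    rw [← hr]
    rw [Finset.prod_ne_zero_iff]
    exact fun ℓ hℓ => hedges ℓ (Finset.mem_range.mp hℓ)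
  have hrne : r ≠ 0 := fun h => hCr (by rw [h, map_zero])
  have hunit : IsUnit (C r : MvPolynomial (Fin n) ℝ) :=
    IsUnit.of_mul_eq_one (C r⁻¹)
      (by rw [← _root_.map_mul, mul_inv_cancel₀ hrne, C_1])
  exact mv_unit_eq_C (isUnit_of_dvd_unit hdvd hunit)

def StrictUp {n : ℕ} (P : Fin n → MvPolynomial (Fin n) ℝ) (j i : Fin n) : Prop :=
  PReach P j i ∧ ¬ PReach P i j

open scoped Classical in
noncomputable def dRank {n : ℕ} (P : Fin n → MvPolynomial (Fin n) ℝ) (i : Fin n) : ℕ :=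
  (Finset.univ.filter (fun j => StrictUp P j i)).card

open scoped Classical in
lemma dRank_eq_of_mutual {n : ℕ} {P : Fin n → MvPolynomial (Fin n) ℝ} {i j : Fin n}
    (hij : PReach P i j) (hji : PReach P j i) : dRank P i = dRank P j := by
  unfold dRank
  congr 1
  apply Finset.filter_congr
  intro k _
  constructor
  · rintro ⟨h1, h2⟩
    exact ⟨h1.trans hij, fun hc => h2 (hij.trans hc)⟩
  · rintro ⟨h1, h2⟩
    exact ⟨h1.trans hji, fun hc => h2 (hji.trans hc)⟩

open scoped Classical in
lemma dRank_lt {n : ℕ} {P : Fin n → MvPolynomial (Fin n) ℝ} {i j : Fin n}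
    (h : StrictUp P j i) : dRank P j < dRank P i := by
  unfold dRank
  apply Finset.card_lt_card
  rw [Finset.ssubset_iff_of_subset]
  · exact ⟨j, Finset.mem_filter.mpr ⟨Finset.mem_univ _, h⟩,
      fun hc => (Finset.mem_filter.mp hc).2.2 (Finset.mem_filter.mp hc).2.1⟩
  · intro k hk
    rw [Finset.mem_filter] at hk ⊢
    obtain ⟨_, hk1, hk2⟩ := hk
    refine ⟨Finset.mem_univ _, hk1.trans h.1, fun hc => h.2 (hc.trans hk1)⟩

open scoped Classical in
lemma dRank_le {n : ℕ} (P : Fin n → MvPolynomial (Fin n) ℝ) (i : Fin n) : dRank P i ≤ n := by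
  unfold dRank
  calc (Finset.univ.filter (fun j => StrictUp P j i)).card ≤ Finset.univ.card :=
        Finset.card_le_card (Finset.filter_subset _ _)
    _ = n := by simp

noncomputable def Nbig {n : ℕ} (P : Fin n → MvPolynomial (Fin n) ℝ) : ℕ :=
  max (Finset.univ.sup fun i => (P i).totalDegree) 1

noncomputable def wt {n : ℕ} (P : Fin n → MvPolynomial (Fin n) ℝ) (i : Fin n) : ℕ :=
  Nbig P ^ dRank P i

def wdegw {n : ℕ} (w : Fin n → ℕ) (α : Fin n →₀ ℕ) : ℕ :=
  α.sum fun j e => e * w j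

lemma wdegw_add {n : ℕ} (w : Fin n → ℕ) (α β : Fin n →₀ ℕ) :
    wdegw w (α + β) = wdegw w α + wdegw w β := by
  unfold wdegw
  exact Finsupp.sum_add_index' (fun j => by simp) (fun j a b => by ring)

lemma wdegw_single {n : ℕ} (w : Fin n → ℕ) (j : Fin n) :
    wdegw w (Finsupp.single j 1) = w j := by
  unfold wdegw
  rw [Finsupp.sum_single_index] <;> simp

lemma one_le_Nbig {n : ℕ} (P : Fin n → MvPolynomial (Fin n) ℝ) : 1 ≤ Nbig P :=
  le_max_right _ _

lemma one_le_wt {n : ℕ} (P : Fin n → MvPolynomial (Fin n) ℝ) (i : Fin n) : 1 ≤ wt P i :=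
  Nat.one_le_pow _ _ (one_le_Nbig P)

lemma wdeg_le_wt {n : ℕ} {P : Fin n → MvPolynomial (Fin n) ℝ}
    (hwdg' : ∀ m : ℕ, 1 ≤ m → ∀ c : ℕ → Fin n, c m = c 0 →
      (∀ ℓ < m, pderiv (c ℓ) (P (c (ℓ + 1))) ≠ 0) →
      ∃ r : ℝ, (∏ ℓ ∈ Finset.range m, pderiv (c ℓ) (P (c (ℓ + 1)))) = C r)
    (i : Fin n) (γ : Fin n →₀ ℕ) (hγ : γ ∈ (P i).support) :
    wdegw (wt P) γ ≤ wt P i := by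
  by_cases hγ0 : γ = 0
  · subst hγ0
    simp [wdegw]
  have hedge : ∀ j ∈ γ.support, PEdge P j i := fun j hj =>
    pderiv_ne_zero_of_mem hγ (Finsupp.mem_support_iff.mp hj)
  by_cases hex : ∃ j ∈ γ.support, PReach P i j
  · obtain ⟨j, hj, hr⟩ := hex
    obtain ⟨cst, hcst⟩ := cycle_const hwdg' (hedge j hj) hr
    have hsingle := eq_single_of_pderiv_C hcst hγ (Finsupp.mem_support_iff.mp hj)
    rw [hsingle, wdegw_single]
    have hdr : dRank P i = dRank P j :=
      dRank_eq_of_mutual hr (Relation.TransGen.single (hedge j hj))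
    unfold wt
    rw [hdr]
  · push_neg at hex
    have hstrict : ∀ j ∈ γ.support, StrictUp P j i := fun j hj =>
      ⟨Relation.TransGen.single (hedge j hj), hex j hj⟩
    have hne : γ.support.Nonempty := Finsupp.support_nonempty_iff.mpr hγ0
    obtain ⟨j0, hj0⟩ := hne
    have hd1 : 1 ≤ dRank P i := by
      have := dRank_lt (hstrict j0 hj0)
      omega
    have hstep : ∀ j ∈ γ.support, wt P j ≤ Nbig P ^ (dRank P i - 1) := by
      intro j hj
      have hlt := dRank_lt (hstrict j hj)
      exact Nat.pow_le_pow_right (one_le_Nbig P) (by omega)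
    calc wdegw (wt P) γ = ∑ j ∈ γ.support, γ j * wt P j := rfl
      _ ≤ ∑ j ∈ γ.support, γ j * Nbig P ^ (dRank P i - 1) :=
          Finset.sum_le_sum fun j hj => Nat.mul_le_mul_left _ (hstep j hj)
      _ = (∑ j ∈ γ.support, γ j) * Nbig P ^ (dRank P i - 1) := by
          rw [Finset.sum_mul]
      _ ≤ Nbig P * Nbig P ^ (dRank P i - 1) := by
          apply Nat.mul_le_mul_right
          calc (∑ j ∈ γ.support, γ j) ≤ (P i).totalDegree := le_totalDegree hγ
            _ ≤ Nbig P := by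
                unfold Nbig
                exact le_trans (Finset.le_sup (f := fun i => (P i).totalDegree) (Finset.mem_univ i)) (le_max_left _ _)
      _ = Nbig P ^ (dRank P i) := by
          rw [← pow_succ']
          congr 1
          omega
      _ = wt P i := rfl

section Construction

variable {n : ℕ} (P : Fin n → MvPolynomial (Fin n) ℝ)

noncomputable def Bbound : ℕ := Nbig P ^ n

lemma wt_le_Bbound (i : Fin n) : wt P i ≤ Bbound P :=
  Nat.pow_le_pow_right (one_le_Nbig P) (dRank_le P i)

noncomputable def MSet : Finset (Fin n →₀ ℕ) :=
  ((Finset.univ : Finset (Fin n → Fin (Bbound P + 1))).image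
    (fun g => Finsupp.equivFunOnFinite.symm (fun j => (g j : ℕ)))).filter
    (fun α => wdegw (wt P) α ≤ Bbound P)

lemma apply_le_wdegw (w : Fin n → ℕ) (hw : ∀ j, 1 ≤ w j) (α : Fin n →₀ ℕ) (j : Fin n) :
    α j ≤ wdegw w α := by
  by_cases h : α j = 0
  · omega
  · calc α j ≤ α j * w j := Nat.le_mul_of_pos_right _ (hw j)
      _ ≤ ∑ k ∈ α.support, α k * w k :=
        Finset.single_le_sum (f := fun k => α k * w k) (fun k _ => Nat.zero_le _)
          (Finsupp.mem_support_iff.mpr h)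
      _ = wdegw w α := rfl

lemma mem_MSet_iff (α : Fin n →₀ ℕ) : α ∈ MSet P ↔ wdegw (wt P) α ≤ Bbound P := by
  constructor
  · intro h
    exact (Finset.mem_filter.mp h).2
  · intro h
    rw [MSet, Finset.mem_filter]
    refine ⟨Finset.mem_image.mpr ⟨fun j => ⟨α j, ?_⟩, Finset.mem_univ _, ?_⟩, h⟩
    · have := apply_le_wdegw (wt P) (one_le_wt P) α j
      omega
    · ext j
      simp [Finsupp.equivFunOnFinite]
  
noncomputable def kdim : ℕ := (MSet P).card

noncomputable def eIdx : Fin (kdim P) ≃ {x // x ∈ MSet P} := (MSet P).equivFin.symm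

noncomputable def Gen : Fin (n + kdim P) → MvPolynomial (Fin n) ℝ :=
  Fin.addCases (fun i => X i) (fun b => monomial ((eIdx P b : Fin n →₀ ℕ)) 1)

lemma Gen_castAdd (i : Fin n) : Gen P (Fin.castAdd (kdim P) i) = X i := by
  rw [Gen, Fin.addCases_left]

lemma Gen_natAdd (b : Fin (kdim P)) :
    Gen P (Fin.natAdd n b) = monomial ((eIdx P b : Fin n →₀ ℕ)) 1 := by
  rw [Gen, Fin.addCases_right]

noncomputable def LieD (Q : MvPolynomial (Fin n) ℝ) : MvPolynomial (Fin n) ℝ :=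
  ∑ j, P j * pderiv j Q

lemma supp_Gen (a : Fin (n + kdim P)) (α : Fin n →₀ ℕ) (hα : α ∈ (Gen P a).support) :
    wdegw (wt P) α ≤ Bbound P := by
  induction a using Fin.addCases with
  | left i =>
      rw [Gen, Fin.addCases_left, support_X] at hα
      rw [Finset.mem_singleton] at hα
      subst hα
      rw [wdegw_single]
      exact wt_le_Bbound P i
  | right b =>
      rw [Gen, Fin.addCases_right] at hα
      rw [support_monomial, if_neg one_ne_zero, Finset.mem_singleton] at hα
      subst hα
      exact (mem_MSet_iff P _).mp (eIdx P b).2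

lemma supp_LieD (Q : MvPolynomial (Fin n) ℝ)
    (hwdg' : ∀ m : ℕ, 1 ≤ m → ∀ c : ℕ → Fin n, c m = c 0 →
      (∀ ℓ < m, pderiv (c ℓ) (P (c (ℓ + 1))) ≠ 0) →
      ∃ r : ℝ, (∏ ℓ ∈ Finset.range m, pderiv (c ℓ) (P (c (ℓ + 1)))) = C r)
    (hQ : ∀ α ∈ Q.support, wdegw (wt P) α ≤ Bbound P)
    (α : Fin n →₀ ℕ) (hα : α ∈ (LieD P Q).support) :
    wdegw (wt P) α ≤ Bbound P := by
  classical
  have h1 := MvPolynomial.support_sum hα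
  rw [Finset.mem_biUnion] at h1
  obtain ⟨j, -, hj⟩ := h1
  have h2 := MvPolynomial.support_mul _ _ hj
  rw [Finset.mem_add] at h2
  obtain ⟨γ, hγ, β, hβ, rfl⟩ := h2
  have hγw : wdegw (wt P) γ ≤ wt P j := wdeg_le_wt hwdg' j γ hγ
  have hβw : wdegw (wt P) β + wt P j ≤ Bbound P := by
    have := hQ _ (mem_support_add_single hβ)
    rwa [wdegw_add, wdegw_single] at this
  rw [wdegw_add]
  omega

open scoped Classical in
noncomputable def Amat : Matrix (Fin (n + kdim P)) (Fin (n + kdim P)) ℝ :=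
  fun a => Fin.addCases (fun _ => 0) (fun b => coeff ((eIdx P b : Fin n →₀ ℕ)) (LieD P (Gen P a)))

lemma eval_sum_MSet (q : MvPolynomial (Fin n) ℝ) (hq : ∀ α ∈ q.support, α ∈ MSet P)
    (x : Fin n → ℝ) :
    eval x q = ∑ b : Fin (kdim P), coeff ((eIdx P b : Fin n →₀ ℕ)) q
      * eval x (monomial ((eIdx P b : Fin n →₀ ℕ)) 1) := by
  have h1 : q = ∑ α ∈ MSet P, monomial α (coeff α q) := by
    conv_lhs => rw [← support_sum_monomial_coeff q]
    refine (Finset.sum_subset (s₁ := q.support) (s₂ := MSet P)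
      (f := fun α => monomial α (coeff α q)) (fun α hα => hq α hα) fun α _ hα => ?_)
    rw [MvPolynomial.notMem_support_iff] at hα
    show monomial α (coeff α q) = 0
    rw [hα]
    exact map_zero (monomial α)
  conv_lhs => rw [h1]
  rw [map_sum]
  have h2 : ∑ b : Fin (kdim P), coeff ((eIdx P b : Fin n →₀ ℕ)) q
      * eval x (monomial ((eIdx P b : Fin n →₀ ℕ)) 1)
      = ∑ α ∈ MSet P, coeff α q * eval x (monomial α 1) := by
    rw [← Finset.sum_coe_sort (MSet P) (fun α => coeff α q * eval x (monomial α 1))]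
    exact Fintype.sum_equiv (eIdx P) _ _ (fun b => rfl)
  rw [h2]
  apply Finset.sum_congr rfl
  intro α _
  rw [eval_monomial, eval_monomial]
  simp [Finsupp.prod]

lemma key_identity
    (hwdg' : ∀ m : ℕ, 1 ≤ m → ∀ c : ℕ → Fin n, c m = c 0 →
      (∀ ℓ < m, pderiv (c ℓ) (P (c (ℓ + 1))) ≠ 0) →
      ∃ r : ℝ, (∏ ℓ ∈ Finset.range m, pderiv (c ℓ) (P (c (ℓ + 1)))) = C r)
    (a : Fin (n + kdim P)) (x : Fin n → ℝ) :
    eval x (LieD P (Gen P a)) = ∑ b, Amat P a b * eval x (Gen P b) := by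
  rw [Fin.sum_univ_add]
  have hzero : ∀ i : Fin n, Amat P a (Fin.castAdd (kdim P) i) * eval x (Gen P (Fin.castAdd (kdim P) i)) = 0 := by
    intro i
    rw [Amat, Fin.addCases_left]
    ring
  rw [Finset.sum_congr rfl fun i _ => hzero i, Finset.sum_const_zero, zero_add]
  have hsupp : ∀ α ∈ (LieD P (Gen P a)).support, α ∈ MSet P := by
    intro α hα
    rw [mem_MSet_iff]
    exact supp_LieD P _ hwdg' (supp_Gen P a) α hα
  rw [eval_sum_MSet P _ hsupp x]
  apply Finset.sum_congr rfl
  intro b _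
  have hA : Amat P a (Fin.natAdd n b) = coeff ((eIdx P b : Fin n →₀ ℕ)) (LieD P (Gen P a)) := by
    rw [Amat, Fin.addCases_right]
  rw [hA, Gen_natAdd]

end Construction


set_option maxHeartbeats 2000000 in
set_option synthInstance.maxHeartbeats 400000 in
/-- A polynomial vector field satisfying the WDG condition is super-linearizable. -/
theorem superlinearizable_of_wdg {n : ℕ} (f : (Fin n → ℝ) → (Fin n → ℝ))
    (hfpoly : IsPolyMap f) (hwdg : SatisfiesWDG f) :
    IsSuperLinearizable f := by
  obtain ⟨P, hP⟩ := hfpoly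
  have hpd : ∀ i j, pd (fun x => f x i) j = fun y => eval y (pderiv j (P i)) := by
    intro i j
    have he : (fun x => f x i) = fun y => eval y (P i) := funext fun y => hP y i
    rw [he, pd_eval]
  have hwdg' : ∀ m : ℕ, 1 ≤ m → ∀ c : ℕ → Fin n, c m = c 0 →
      (∀ ℓ < m, pderiv (c ℓ) (P (c (ℓ + 1))) ≠ 0) →
      ∃ r : ℝ, (∏ ℓ ∈ Finset.range m, pderiv (c ℓ) (P (c (ℓ + 1)))) = C r := by
    intro m hm c hc hnz
    obtain ⟨r, hr⟩ := hwdg m hm c hc (by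
      intro ℓ hℓ
      have he : (fun x => f x (c (ℓ + 1))) = fun y => eval y (P (c (ℓ + 1))) :=
        funext fun y => hP y _
      rw [he]
      exact pd_eval_ne_zero _ _ (hnz ℓ hℓ))
    refine ⟨r, MvPolynomial.funext fun y => ?_⟩
    calc eval y (∏ ℓ ∈ Finset.range m, pderiv (c ℓ) (P (c (ℓ + 1))))
        = ∏ ℓ ∈ Finset.range m, eval y (pderiv (c ℓ) (P (c (ℓ + 1)))) := map_prod _ _ _
      _ = ∏ ℓ ∈ Finset.range m, pd (fun x' => f x' (c (ℓ + 1))) (c ℓ) y :=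
          Finset.prod_congr rfl fun ℓ _ => by rw [hpd]
      _ = r := hr y
      _ = eval y (C r) := (eval_C _).symm
  set N := n + kdim P with hN
  set A : Matrix (Fin N) (Fin N) ℝ := Amat P with hA
  refine ⟨kdim P, A, fun x' b => eval x' (monomial ((eIdx P b : Fin n →₀ ℕ)) 1),
    ⟨fun b => monomial ((eIdx P b : Fin n →₀ ℕ)) 1, fun x' b => rfl⟩, ?_⟩
  intro x₀ x hx0 hx
  set Y : ℝ → Fin N → ℝ := fun s a => eval (x s) (Gen P a) with hYdef
  have hY0 : Fin.append x₀ (fun b => eval x₀ (monomial ((eIdx P b : Fin n →₀ ℕ)) 1)) = Y 0 := by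
    funext a
    induction a using Fin.addCases with
    | left i =>
        rw [Fin.append_left, hYdef]
        simp only [Gen_castAdd, eval_X]
        rw [hx0]
    | right b =>
        rw [Fin.append_right, hYdef]
        simp only [Gen_natAdd]
        rw [hx0]
  have hYd : ∀ s, 0 ≤ s → ∀ a, HasDerivAt (fun u => Y u a) (A.mulVec (Y s) a) s := by
    intro s hs a
    have h1 := mv_hasDerivAt_comp (Gen P a) x (f (x s)) s (hx s hs)
    convert h1 using 1
    have h2 : A.mulVec (Y s) a = ∑ b, A a b * Y s b := by
      simp [Matrix.mulVec, dotProduct]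
    rw [h2]
    rw [← key_identity P hwdg' a (x s)]
    rw [LieD, map_sum]
    apply Finset.sum_congr rfl
    intro j _
    rw [_root_.map_mul, ← hP (x s) j]
    ring
  -- norm instances on matrices
  letI : SeminormedRing (Matrix (Fin N) (Fin N) ℝ) := Matrix.linftyOpSemiNormedRing
  letI : NormedRing (Matrix (Fin N) (Fin N) ℝ) := Matrix.linftyOpNormedRing
  letI : NormedAlgebra ℝ (Matrix (Fin N) (Fin N) ℝ) := Matrix.linftyOpNormedAlgebra
  have entryCLM : ∀ a b : Fin N, ∃ L : Matrix (Fin N) (Fin N) ℝ →L[ℝ] ℝ,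
      ∀ M : Matrix (Fin N) (Fin N) ℝ, L M = M a b := by
    intro a b
    refine ⟨LinearMap.toContinuousLinearMap
      ⟨⟨fun M => M a b, fun _ _ => rfl⟩, fun _ _ => rfl⟩, fun M => rfl⟩
  have hEd : ∀ (a b : Fin N) (s : ℝ),
      HasDerivAt (fun u => NormedSpace.exp (u • (-A)) a b)
        (((-A) * NormedSpace.exp (s • (-A))) a b) s := by
    intro a b s
    obtain ⟨L, hL⟩ := entryCLM a b
    have h := hasDerivAt_exp_smul_const' (𝕂 := ℝ) (-A) s
    have h2 := (L.hasFDerivAt).comp_hasDerivAt s h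
    have h3 : (⇑L ∘ fun u : ℝ => NormedSpace.exp (u • -A))
        = fun u : ℝ => NormedSpace.exp (u • -A) a b := by
      funext u
      exact hL _
    simp only [Function.comp_def, hL] at h2
    exact h2.congr_deriv (hL _)
  have hconst : ∀ t : ℝ, 0 ≤ t → ∀ a : Fin N,
      (NormedSpace.exp (t • (-A))).mulVec (Y t) a = Y 0 a := by
    intro t ht a
    set g : ℝ → ℝ := fun u => ∑ b, NormedSpace.exp (u • (-A)) a b * Y u b with hg
    have hgd : ∀ u, 0 ≤ u → HasDerivAt g (0:ℝ) u := by
      intro u hu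
      set E := NormedSpace.exp (u • (-A)) with hE
      have hterm : ∀ b : Fin N, HasDerivAt
          (fun w => NormedSpace.exp (w • (-A)) a b * Y w b)
          (((-A) * E) a b * Y u b + E a b * (A.mulVec (Y u) b)) u := by
        intro b
        exact (hEd a b u).mul (hYd u hu b)
      have hsum := HasDerivAt.fun_sum (fun b (_ : b ∈ Finset.univ) => hterm b)
      refine hsum.congr_deriv (Eq.symm ?_)
      rw [Finset.sum_add_distrib]
      have e1 : ∑ b, ((-A) * E) a b * Y u b = (((-A) * E).mulVec (Y u)) a := by
        simp [Matrix.mulVec, dotProduct]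
      have e2 : ∑ b, E a b * (A.mulVec (Y u) b) = (E.mulVec (A.mulVec (Y u))) a := by
        simp [Matrix.mulVec, dotProduct]
      have hcomm : A * E = E * A := by
        have hc : Commute A (u • (-A)) := ((Commute.refl A).neg_right).smul_right u
        exact (hc.exp_right)
      rw [e1, e2, Matrix.mulVec_mulVec, neg_mul, hcomm, Matrix.neg_mulVec]
      simp
    have hcont : ContinuousOn g (Set.Icc 0 t) := by
      intro u hu
      exact ((hgd u hu.1).continuousAt).continuousWithinAt
    have hderivW : ∀ u ∈ Set.Ico 0 t, HasDerivWithinAt g 0 (Set.Ici u) u := by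
      intro u hu
      exact (hgd u hu.1).hasDerivWithinAt
    have := constant_of_has_deriv_right_zero hcont hderivW t (Set.mem_Icc.mpr ⟨ht, le_refl t⟩)
    have hg0 : g 0 = Y 0 a := by
      rw [hg]
      simp only [zero_smul, NormedSpace.exp_zero]
      have : ∑ b, (1 : Matrix (Fin N) (Fin N) ℝ) a b * Y 0 b = (1 : Matrix (Fin N) (Fin N) ℝ).mulVec (Y 0) a := by
        simp [Matrix.mulVec, dotProduct]
      rw [this, Matrix.one_mulVec]
    have hgt : (NormedSpace.exp (t • (-A))).mulVec (Y t) a = g t := by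
      simp [hg, Matrix.mulVec, dotProduct]
    rw [hgt, this, hg0]
  intro t ht i
  have hEprod : NormedSpace.exp (t • A) * NormedSpace.exp (t • (-A)) = 1 := by
    have hc : Commute (t • A) (t • (-A)) :=
      (((Commute.refl A).neg_right).smul_left t).smul_right t
    rw [← Matrix.exp_add_of_commute _ _ hc]
    have : t • A + t • (-A) = 0 := by rw [smul_neg, add_neg_cancel]
    rw [this, NormedSpace.exp_zero]
  have hYvec : Fin.append x₀ (fun b => eval x₀ (monomial ((eIdx P b : Fin n →₀ ℕ)) 1))
      = (NormedSpace.exp (t • (-A))).mulVec (Y t) := by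
    rw [hY0]
    funext a
    exact (hconst t ht a).symm
  rw [hYvec, Matrix.mulVec_mulVec, hEprod, Matrix.one_mulVec]
  rw [hYdef]
  simp only [Gen_castAdd, eval_X]
end

section
/- Let f : ℝⁿ → ℝⁿ be a super-linearizable polynomial vector field and let g : ℝⁿ → ℝᵏ be a polynomial map. Then the polynomial vector field f̃ : ℝ^{n+k} → ℝ^{n+k} defined by f̃(x, w) = (f(x), g(x)) for x ∈ ℝⁿ, w ∈ ℝᵏ is super-linearizable. -/
open Matrix MvPolynomial

section ExpHelpers

variable {N : Type*} [Fintype N] [DecidableEq N]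

lemma exp_entry_hasDerivAt (B : Matrix N N ℝ) (t : ℝ) (i j : N) :
    HasDerivAt (fun s : ℝ => NormedSpace.exp (s • B) i j)
      ((NormedSpace.exp (t • B) * B) i j) t := by
  letI : SeminormedRing (Matrix N N ℝ) := Matrix.linftyOpSemiNormedRing
  letI : NormedRing (Matrix N N ℝ) := Matrix.linftyOpNormedRing
  letI : NormedAlgebra ℝ (Matrix N N ℝ) := Matrix.linftyOpNormedAlgebra
  have h := hasDerivAt_exp_smul_const (𝕂 := ℝ) B t
  have hlin : IsLinearMap ℝ (fun M : Matrix N N ℝ => M i j) :=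
    ⟨fun _ _ => rfl, fun _ _ => rfl⟩
  let L : Matrix N N ℝ →ₗ[ℝ] ℝ := IsLinearMap.mk' _ hlin
  have hc : Continuous L := L.continuous_of_finiteDimensional
  exact (ContinuousLinearMap.hasFDerivAt
    (⟨L, hc⟩ : Matrix N N ℝ →L[ℝ] ℝ)).comp_hasDerivAt t h

lemma exp_smul_comm (B : Matrix N N ℝ) (t : ℝ) :
    NormedSpace.exp (t • B) * B = B * NormedSpace.exp (t • B) := by
  letI : SeminormedRing (Matrix N N ℝ) := Matrix.linftyOpSemiNormedRing
  letI : NormedRing (Matrix N N ℝ) := Matrix.linftyOpNormedRing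
  letI : NormedAlgebra ℝ (Matrix N N ℝ) := Matrix.linftyOpNormedAlgebra
  exact (((Commute.refl B).smul_left t).exp_left).eq

lemma exp_mulVec_hasDerivAt (B : Matrix N N ℝ) (v : N → ℝ) (t : ℝ) :
    HasDerivAt (fun s : ℝ => (NormedSpace.exp (s • B)).mulVec v)
      ((NormedSpace.exp (t • B) * B).mulVec v) t := by
  apply hasDerivAt_pi.mpr
  intro i
  simp only [Matrix.mulVec, dotProduct]
  exact HasDerivAt.fun_sum fun j _ => (exp_entry_hasDerivAt B t i j).mul_const (v j)

lemma linear_ode_unique (B : Matrix N N ℝ) (u : ℝ → N → ℝ)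
    (hu : ∀ t, HasDerivAt u (B.mulVec (u t)) t) (t : ℝ) :
    u t = (NormedSpace.exp (t • B)).mulVec (u 0) := by
  set E : ℝ → Matrix N N ℝ := fun s => NormedSpace.exp (s • (-B)) with hE
  have hh : ∀ (i : N) (s : ℝ), HasDerivAt (fun r => ∑ j, E r i j * u r j) 0 s := by
    intro i s
    have h1 : ∀ j, HasDerivAt (fun r => E r i j) ((E s * (-B)) i j) s :=
      fun j => exp_entry_hasDerivAt (-B) s i j
    have h2 : ∀ j, HasDerivAt (fun r => u r j) (B.mulVec (u s) j) s :=
      fun j => hasDerivAt_pi.mp (hu s) j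
    have hsum : HasDerivAt (fun r => ∑ j, E r i j * u r j)
        (∑ j, ((E s * (-B)) i j * u s j + E s i j * B.mulVec (u s) j)) s :=
      HasDerivAt.fun_sum fun j _ => (h1 j).mul (h2 j)
    have hzero : (∑ j, ((E s * (-B)) i j * u s j + E s i j * B.mulVec (u s) j)) = 0 := by
      rw [Finset.sum_add_distrib]
      have e1 : ∑ j, (E s * (-B)) i j * u s j = ((E s * (-B)).mulVec (u s)) i := rfl
      have e2 : ∑ j, E s i j * (B.mulVec (u s)) j = ((E s).mulVec (B.mulVec (u s))) i := rfl
      rw [e1, e2, Matrix.mulVec_mulVec]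
      simp [Matrix.mul_neg, Matrix.neg_mulVec]
    rwa [hzero] at hsum
  have hconst : ∀ i, (∑ j, E t i j * u t j) = ∑ j, E 0 i j * u 0 j := by
    intro i
    exact is_const_of_deriv_eq_zero (fun s => (hh i s).differentiableAt)
      (fun s => (hh i s).deriv) t 0
  have hE0 : E 0 = 1 := by
    rw [hE]; simp only [zero_smul]; exact NormedSpace.exp_zero
  have hinv : NormedSpace.exp (t • B) * E t = 1 := by
    rw [hE]
    rw [← Matrix.exp_add_of_commute]
    · rw [smul_neg, add_neg_cancel]; exact NormedSpace.exp_zero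
    · exact ((Commute.refl B).neg_right.smul_left t).smul_right t
  have hvec : (E t).mulVec (u t) = u 0 := by
    funext i
    have h3 := hconst i
    have e1 : ∑ j, E t i j * u t j = (E t).mulVec (u t) i := rfl
    have e2 : ∑ j, E 0 i j * u 0 j = (E 0).mulVec (u 0) i := rfl
    rwa [e1, e2, hE0, Matrix.one_mulVec] at h3
  have h4 : (NormedSpace.exp (t • B)).mulVec ((E t).mulVec (u t))
      = (NormedSpace.exp (t • B)).mulVec (u 0) := by rw [hvec]
  rwa [Matrix.mulVec_mulVec, hinv, Matrix.one_mulVec] at h4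

end ExpHelpers

section Mono

variable {ν D : ℕ}

/-- total degree of a bounded multi-index -/
def mdeg (α : Fin ν → Fin (D + 1)) : ℕ := ∑ l, (α l : ℕ)

/-- truncated monomial function -/
def mono (v : Fin ν → ℝ) (α : Fin ν → Fin (D + 1)) : ℝ :=
  if mdeg α ≤ D then ∏ l, v l ^ (α l : ℕ) else 0

/-- multi-index obtained by removing one power of variable `i` and adding one of `j` -/
def shiftIdx (α : Fin ν → Fin (D + 1)) (i j : Fin ν) : Fin ν → Fin (D + 1) :=
  fun l => ⟨min D ((α l : ℕ) - (if l = i then 1 else 0) + (if l = j then 1 else 0)),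
    Nat.lt_succ_of_le (min_le_left _ _)⟩

/-- the matrix governing the linear evolution of truncated monomials -/
def monoMat (A : Matrix (Fin ν) (Fin ν) ℝ) (D : ℕ) :
    Matrix (Fin ν → Fin (D + 1)) (Fin ν → Fin (D + 1)) ℝ :=
  fun α β => if mdeg α ≤ D then
    ∑ i, ∑ j, (if β = shiftIdx α i j then ((α i : ℕ) : ℝ) * A i j else 0) else 0

lemma monoMat_mulVec (A : Matrix (Fin ν) (Fin ν) ℝ) (v : (Fin ν → Fin (D + 1)) → ℝ)
    (α : Fin ν → Fin (D + 1)) :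
    (monoMat A D).mulVec v α =
      if mdeg α ≤ D then ∑ i, ∑ j, ((α i : ℕ) : ℝ) * A i j * v (shiftIdx α i j) else 0 := by
  simp only [Matrix.mulVec, dotProduct, monoMat]
  split_ifs with h
  · calc (∑ β, (∑ i, ∑ j, if β = shiftIdx α i j then ((α i : ℕ) : ℝ) * A i j else 0) * v β)
        = ∑ β, ∑ i, ∑ j, (if β = shiftIdx α i j then ((α i : ℕ) : ℝ) * A i j * v β else 0) := by
          refine Finset.sum_congr rfl fun β _ => ?_
          rw [Finset.sum_mul]
          refine Finset.sum_congr rfl fun i _ => ?_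
          rw [Finset.sum_mul]
          refine Finset.sum_congr rfl fun j _ => ?_
          rw [ite_mul, zero_mul]
      _ = ∑ i, ∑ j, ∑ β, (if β = shiftIdx α i j then ((α i : ℕ) : ℝ) * A i j * v β else 0) := by
          rw [Finset.sum_comm]
          exact Finset.sum_congr rfl fun i _ => Finset.sum_comm
      _ = ∑ i, ∑ j, ((α i : ℕ) : ℝ) * A i j * v (shiftIdx α i j) := by
          simp [Finset.sum_ite_eq']
  · simp


lemma mono_hasDerivAt (A : Matrix (Fin ν) (Fin ν) ℝ) (y : ℝ → Fin ν → ℝ)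
    (hy : ∀ t, HasDerivAt y (A.mulVec (y t)) t) (t : ℝ) (α : Fin ν → Fin (D + 1)) :
    HasDerivAt (fun s => mono (y s) α)
      ((monoMat A D).mulVec (fun β => mono (y t) β) α) t := by
  rw [monoMat_mulVec]
  by_cases hα : mdeg α ≤ D
  · rw [if_pos hα]
    have hfun : (fun s => mono (y s) α) = fun s => ∏ l, y s l ^ (α l : ℕ) := by
      funext s; rw [mono, if_pos hα]
    rw [hfun]
    have hpow : ∀ l : Fin ν, HasDerivAt (fun r => y r l ^ (α l : ℕ))
        (((α l : ℕ) : ℝ) * y t l ^ ((α l : ℕ) - 1) * A.mulVec (y t) l) t :=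
      fun l => (hasDerivAt_pi.mp (hy t) l).pow _
    have hprod := HasDerivAt.fun_finset_prod (u := Finset.univ)
      (f := fun l r => y r l ^ (α l : ℕ)) (x := t)
      (f' := fun l => ((α l : ℕ) : ℝ) * y t l ^ ((α l : ℕ) - 1) * A.mulVec (y t) l)
      (fun l _ => hpow l)
    refine hprod.congr_deriv ?_
    symm
    refine Finset.sum_congr rfl fun i _ => ?_
    rw [smul_eq_mul]
    by_cases hzi : (α i : ℕ) = 0
    · simp [hzi]
    have h1 : 1 ≤ (α i : ℕ) := Nat.one_le_iff_ne_zero.mpr hzi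
    have hmv : A.mulVec (y t) i = ∑ j, A i j * y t j := rfl
    beta_reduce
    rw [hmv]
    simp only [Finset.mul_sum]
    refine Finset.sum_congr rfl fun j _ => ?_
    -- exponent bookkeeping
    have hpt : ∀ l, ((α l : ℕ) - (if l = i then 1 else 0) + (if l = j then 1 else 0))
        + (if l = i then 1 else 0) = (α l : ℕ) + (if l = j then 1 else 0) := by
      intro l
      rcases eq_or_ne l i with rfl | hli
      · rw [if_pos rfl]; omega
      · rw [if_neg hli]; omega
    have hite : ∀ a : Fin ν, (∑ l, (if l = a then 1 else 0) : ℕ) = 1 := by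
      intro a; simp [Finset.sum_ite_eq']
    have hr : (∑ l, ((α l : ℕ) - (if l = i then 1 else 0) + (if l = j then 1 else 0)))
        = mdeg α := by
      have h2 := Finset.sum_congr rfl (fun l (_ : l ∈ Finset.univ) => hpt l)
      have hL : (∑ l, (((α l : ℕ) - (if l = i then 1 else 0) + (if l = j then 1 else 0))
          + (if l = i then 1 else 0)))
          = (∑ l, ((α l : ℕ) - (if l = i then 1 else 0) + (if l = j then 1 else 0))) + 1 := by
        rw [Finset.sum_add_distrib, hite i]
      have hR : (∑ l, ((α l : ℕ) + (if l = j then 1 else 0))) = mdeg α + 1 := by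
        rw [Finset.sum_add_distrib, hite j]; rfl
      rw [hL, hR] at h2
      omega
    have hrle : ∀ l, ((α l : ℕ) - (if l = i then 1 else 0) + (if l = j then 1 else 0)) ≤ D := by
      intro l
      have h2 : ((α l : ℕ) - (if l = i then 1 else 0) + (if l = j then 1 else 0))
          ≤ ∑ l', ((α l' : ℕ) - (if l' = i then 1 else 0) + (if l' = j then 1 else 0)) :=
        Finset.single_le_sum
          (f := fun l' => ((α l' : ℕ) - (if l' = i then 1 else 0) + (if l' = j then 1 else 0)))
          (fun _ _ => Nat.zero_le _) (Finset.mem_univ l)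
      rw [hr] at h2; exact le_trans h2 hα
    have hsv : ∀ l, ((shiftIdx α i j l : ℕ))
        = (α l : ℕ) - (if l = i then 1 else 0) + (if l = j then 1 else 0) := by
      intro l; exact min_eq_right (hrle l)
    have hds : mdeg (shiftIdx α i j) ≤ D := by
      unfold mdeg
      rw [Finset.sum_congr rfl fun l (_ : l ∈ Finset.univ) => hsv l, hr]
      exact hα
    have hmono : mono (y t) (shiftIdx α i j)
        = ∏ l, y t l ^ ((α l : ℕ) - (if l = i then 1 else 0) + (if l = j then 1 else 0)) := by
      rw [mono, if_pos hds]
      exact Finset.prod_congr rfl fun l _ => by rw [hsv l]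
    have hkey : (∏ l, y t l ^ ((α l : ℕ) - (if l = i then 1 else 0) + (if l = j then 1 else 0)))
        = (∏ l ∈ Finset.univ.erase i, y t l ^ (α l : ℕ))
          * (y t i ^ ((α i : ℕ) - 1) * y t j) := by
      rcases eq_or_ne i j with rfl | hij
      · have hexp : ∀ l, ((α l : ℕ) - (if l = i then 1 else 0) + (if l = i then 1 else 0))
            = (α l : ℕ) := by
          intro l
          by_cases hli : l = i
          · subst hli; rw [if_pos rfl]; omega
          · rw [if_neg hli]; omega
        rw [Finset.prod_congr rfl fun l (_ : l ∈ Finset.univ) => by rw [hexp l]]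
        rw [← pow_succ]
        have : (α i : ℕ) - 1 + 1 = (α i : ℕ) := by omega
        rw [this]
        exact (Finset.prod_erase_mul _ _ (Finset.mem_univ i)).symm
      · have hji : j ≠ i := hij.symm
        have hmem : j ∈ Finset.univ.erase i := Finset.mem_erase.mpr ⟨hji, Finset.mem_univ j⟩
        have hri : ((α i : ℕ) - (if i = i then 1 else 0) + (if i = j then 1 else 0))
            = (α i : ℕ) - 1 := by rw [if_pos rfl, if_neg hij]; omega
        have hrj : ((α j : ℕ) - (if j = i then 1 else 0) + (if j = j then 1 else 0))
            = (α j : ℕ) + 1 := by rw [if_neg hji, if_pos rfl]; omega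
        rw [← Finset.prod_erase_mul _ _ (Finset.mem_univ i),
          ← Finset.prod_erase_mul _ _ hmem, hri, hrj]
        rw [← Finset.prod_erase_mul _ _ hmem]
        have hee : ∀ l ∈ (Finset.univ.erase i).erase j,
            y t l ^ ((α l : ℕ) - (if l = i then 1 else 0) + (if l = j then 1 else 0))
              = y t l ^ (α l : ℕ) := by
          intro l hl
          have h2 := Finset.mem_erase.mp hl
          have h3 := Finset.mem_erase.mp h2.2
          rw [if_neg h3.1, if_neg h2.1]; norm_num
        rw [Finset.prod_congr rfl hee, pow_succ]
        ring
    rw [hmono, hkey]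
    ring
  · rw [if_neg hα]
    have hfun : (fun s => mono (y s) α) = fun _ => (0 : ℝ) := by
      funext s; rw [mono, if_neg hα]
    rw [hfun]
    exact hasDerivAt_const t 0


/-- a bounded multi-index as a finitely supported function -/
noncomputable def toFs (α : Fin ν → Fin (D + 1)) : Fin ν →₀ ℕ :=
  Finsupp.equivFunOnFinite.symm fun l => (α l : ℕ)

@[simp] lemma toFs_apply (α : Fin ν → Fin (D + 1)) (l : Fin ν) : toFs α l = (α l : ℕ) := rfl

lemma eval_eq_sum_mono (φ : MvPolynomial (Fin ν) ℝ) (hφ : φ.totalDegree ≤ D)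
    (v : Fin ν → ℝ) :
    MvPolynomial.eval v φ
      = ∑ α : Fin ν → Fin (D + 1), MvPolynomial.coeff (toFs α) φ * mono v α := by
  classical
  have hsupD : ∀ d ∈ φ.support, ∀ l, d l ≤ D := by
    intro d hd l
    have h1 : (d.sum fun _ e => e) ≤ D := le_trans (MvPolynomial.le_totalDegree hd) hφ
    have h2 : (d.sum fun _ e => e) = ∑ l', d l' := Finsupp.sum_fintype _ _ (fun _ => rfl)
    by_cases h3 : d l = 0
    · omega
    · have h4 : d l ≤ ∑ l', d l' :=
        Finset.single_le_sum (f := fun l' => d l') (fun _ _ => Nat.zero_le _) (Finset.mem_univ l)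
      omega
  -- each summand with the truncation removed
  have hterm : ∀ α : Fin ν → Fin (D + 1),
      MvPolynomial.coeff (toFs α) φ * mono v α
        = MvPolynomial.coeff (toFs α) φ * ∏ l, v l ^ (α l : ℕ) := by
    intro α
    rw [mono]
    split_ifs with h
    · rfl
    · -- coeff is zero
      have hd : toFs α ∉ φ.support := by
        intro hmem
        have h1 : ((toFs α).sum fun _ e => e) ≤ D :=
          le_trans (MvPolynomial.le_totalDegree hmem) hφ
        have h2 : ((toFs α).sum fun _ e => e) = ∑ l, (α l : ℕ) :=
          Finsupp.sum_fintype _ _ (fun _ => rfl)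
        exact h (by unfold mdeg; omega)
      rw [MvPolynomial.notMem_support_iff.mp hd]
      ring
    
  rw [Finset.sum_congr rfl fun α _ => hterm α, MvPolynomial.eval_eq']
  -- restrict the RHS sum to indices whose finsupp lies in the support
  rw [← Finset.sum_subset (Finset.subset_univ
    ((Finset.univ : Finset (Fin ν → Fin (D + 1))).filter fun α => toFs α ∈ φ.support)) ?zero]
  case zero =>
    intro α _ hα
    rw [Finset.mem_filter] at hα
    push_neg at hα
    have : toFs α ∉ φ.support := hα (Finset.mem_univ α)
    rw [MvPolynomial.notMem_support_iff.mp this]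
    ring
  -- now a bijection
  refine Finset.sum_nbij' (i := fun d => fun l => (⟨min D (d l), Nat.lt_succ_of_le (min_le_left _ _)⟩ : Fin (D + 1)))
    (j := fun α => toFs α) ?_ ?_ ?_ ?_ ?_
  · intro d hd
    rw [Finset.mem_filter]
    refine ⟨Finset.mem_univ _, ?_⟩
    have : toFs (fun l => (⟨min D (d l), Nat.lt_succ_of_le (min_le_left _ _)⟩ : Fin (D + 1)))
        = d := by
      ext l
      rw [toFs_apply]
      exact min_eq_right (hsupD d hd l)
    rw [this]; exact hd
  · intro α hα
    exact (Finset.mem_filter.mp hα).2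
  · intro d hd
    ext l
    rw [toFs_apply]
    exact min_eq_right (hsupD d hd l)
  · intro α _
    funext l
    exact Fin.ext (min_eq_right (Nat.lt_succ_iff.mp (α l).isLt))
  · intro d hd
    have he : toFs (fun l => (⟨min D (d l), Nat.lt_succ_of_le (min_le_left _ _)⟩ : Fin (D + 1)))
        = d := by
      ext l
      rw [toFs_apply]
      exact min_eq_right (hsupD d hd l)
    rw [he]
    refine congrArg _ (Finset.prod_congr rfl fun l _ => ?_)
    show v l ^ d l = v l ^ (min D (d l))
    rw [min_eq_right (hsupD d hd l)]

/-- the multi-index of a single variable -/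
def deltaIdx (i : Fin ν) : Fin ν → Fin (D + 1) :=
  fun l => ⟨if l = i then min 1 D else 0, by split <;> omega⟩

lemma mono_deltaIdx (hD : 1 ≤ D) (v : Fin ν → ℝ) (i : Fin ν) :
    mono v (deltaIdx (D := D) i) = v i := by
  have hval : ∀ l, ((deltaIdx (D := D) i l : ℕ)) = if l = i then 1 else 0 := by
    intro l
    show (if l = i then min 1 D else 0) = _
    split <;> omega
  have hdeg : mdeg (deltaIdx (D := D) i) = 1 := by
    unfold mdeg
    rw [Finset.sum_congr rfl fun l _ => hval l]
    simp [Finset.sum_ite_eq']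
  rw [mono, if_pos (hdeg ▸ hD)]
  have : ∀ l ∈ Finset.univ, v l ^ ((deltaIdx (D := D) i l : ℕ))
      = if l = i then v l else 1 := by
    intro l _
    rw [hval l]
    split <;> simp
  rw [Finset.prod_congr rfl this]
  simp [Finset.prod_ite_eq']

end Mono

lemma matrix_exp_zero {N : Type*} [Fintype N] [DecidableEq N] :
    NormedSpace.exp (0 : Matrix N N ℝ) = 1 := by
  letI : SeminormedRing (Matrix N N ℝ) := Matrix.linftyOpSemiNormedRing
  letI : NormedRing (Matrix N N ℝ) := Matrix.linftyOpNormedRing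
  letI : NormedAlgebra ℝ (Matrix N N ℝ) := Matrix.linftyOpNormedAlgebra
  exact NormedSpace.exp_zero

lemma exp_reindex {N M : Type*} [Fintype N] [DecidableEq N] [Fintype M] [DecidableEq M]
    (e : N ≃ M) (B : Matrix N N ℝ) :
    NormedSpace.exp (Matrix.reindex e e B) = Matrix.reindex e e (NormedSpace.exp B) := by
  letI : SeminormedRing (Matrix N N ℝ) := Matrix.linftyOpSemiNormedRing
  letI : NormedRing (Matrix N N ℝ) := Matrix.linftyOpNormedRing
  letI : NormedAlgebra ℝ (Matrix N N ℝ) := Matrix.linftyOpNormedAlgebra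
  letI : SeminormedRing (Matrix M M ℝ) := Matrix.linftyOpSemiNormedRing
  letI : NormedRing (Matrix M M ℝ) := Matrix.linftyOpNormedRing
  letI : NormedAlgebra ℝ (Matrix M M ℝ) := Matrix.linftyOpNormedAlgebra
  letI : NormedAlgebra ℚ (Matrix N N ℝ) := Matrix.linftyOpNormedAlgebra
  have hcont : Continuous (Matrix.reindexAlgEquiv (R := ℝ) (A := ℝ) e) := by
    have := LinearMap.continuous_of_finiteDimensional
      (Matrix.reindexAlgEquiv (R := ℝ) (A := ℝ) e).toLinearMap
    exact this
  have h := NormedSpace.map_exp (Matrix.reindexAlgEquiv (R := ℝ) (A := ℝ) e) hcont B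
  have h2 := h.symm
  simp only [Matrix.reindexAlgEquiv_apply, Matrix.reindex_apply] at h2 ⊢
  exact h2


/-- If `f : ℝⁿ → ℝⁿ` is a super-linearizable polynomial vector field and `g : ℝⁿ → ℝᵏ` is a
polynomial map, then the vector field `f̃(x, w) = (f(x), g(x))` on `ℝ^{n+k}` is
super-linearizable. -/
theorem superlinearizable_lift {n k : ℕ}
    (f : (Fin n → ℝ) → (Fin n → ℝ)) (g : (Fin n → ℝ) → (Fin k → ℝ))
    (hfpoly : IsPolyMap f) (hfsl : IsSuperLinearizable f) (hgpoly : IsPolyMap g)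
    (F : (Fin (n + k) → ℝ) → (Fin (n + k) → ℝ))
    (hF : ∀ z : Fin (n + k) → ℝ,
      F z = Fin.append (f fun i => z (Fin.castAdd k i)) (g fun i => z (Fin.castAdd k i))) :
    IsSuperLinearizable F := by
  classical
  obtain ⟨Q, hQ⟩ := hgpoly
  obtain ⟨m, A, p, ⟨R, hR⟩, Hsol⟩ := hfsl
  set D : ℕ := (Finset.univ.sup fun j => (Q j).totalDegree) + 1 with hDdef
  have hD1 : 1 ≤ D := Nat.le_add_left 1 _
  have hQD : ∀ j, (MvPolynomial.rename (Fin.castAdd m) (Q j)).totalDegree ≤ D := by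
    intro j
    refine le_trans (MvPolynomial.totalDegree_rename_le _ _) ?_
    refine le_trans (Finset.le_sup (f := fun j => (Q j).totalDegree) (Finset.mem_univ j)) ?_
    omega
  let I := Fin (n + m) → Fin (D + 1)
  let k' := Fintype.card I
  let eI : I ≃ Fin k' := Fintype.equivFin I
  let σ : ((Fin n ⊕ Fin k) ⊕ I) ≃ Fin ((n + k) + k') :=
    (Equiv.sumCongr finSumFinEquiv eI).trans finSumFinEquiv
  let cg : Fin k → I → ℝ := fun j β =>
    MvPolynomial.coeff (toFs β) (MvPolynomial.rename (Fin.castAdd m) (Q j))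
  let B : Matrix ((Fin n ⊕ Fin k) ⊕ I) ((Fin n ⊕ Fin k) ⊕ I) ℝ := fun r c =>
    Sum.casesOn c (fun _ => 0) fun β =>
      Sum.casesOn r
        (fun rc => Sum.casesOn rc
          (fun i => monoMat A D (deltaIdx (D := D) (Fin.castAdd m i)) β)
          (fun j => cg j β))
        (fun α => monoMat A D α β)
  let q : (Fin (n + k) → ℝ) → Fin k' → ℝ := fun z jj =>
    mono (Fin.append (fun i => z (Fin.castAdd k i)) (p fun i => z (Fin.castAdd k i)))
      (eI.symm jj)
  refine ⟨k', Matrix.reindex σ σ B, q, ?_, ?_⟩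
  · -- `q` is a polynomial map
    let T : Fin (n + m) → MvPolynomial (Fin (n + k)) ℝ :=
      Fin.append (fun i => MvPolynomial.X (Fin.castAdd k i))
        (fun l => MvPolynomial.rename (Fin.castAdd k) (R l))
    refine ⟨fun jj => if mdeg (eI.symm jj) ≤ D
      then ∏ l, T l ^ ((eI.symm jj l : ℕ)) else 0, ?_⟩
    intro z jj
    beta_reduce
    have hT : ∀ l, MvPolynomial.eval z (T l)
        = Fin.append (fun i => z (Fin.castAdd k i)) (p fun i => z (Fin.castAdd k i)) l := by
      intro l
      refine Fin.addCases (fun i => ?_) (fun i => ?_) l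
      · show MvPolynomial.eval z
          (Fin.append (fun i => MvPolynomial.X (Fin.castAdd k i))
            (fun l => MvPolynomial.rename (Fin.castAdd k) (R l)) (Fin.castAdd m i)) = _
        rw [Fin.append_left, Fin.append_left, MvPolynomial.eval_X]
      · show MvPolynomial.eval z
          (Fin.append (fun i => MvPolynomial.X (Fin.castAdd k i))
            (fun l => MvPolynomial.rename (Fin.castAdd k) (R l)) (Fin.natAdd n i)) = _
        rw [Fin.append_right, Fin.append_right, MvPolynomial.eval_rename, hR]
        rfl
    show mono _ (eI.symm jj) = _
    rw [mono]
    split_ifs with h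
    · rw [map_prod]
      refine Finset.prod_congr rfl fun l _ => ?_
      rw [map_pow, hT l]
    · rw [map_zero]
  · -- the solution property
    intro z₀ z hz0 hz
    set x₀ : Fin n → ℝ := fun i => z₀ (Fin.castAdd k i) with hx₀def
    set x : ℝ → Fin n → ℝ := fun t i => z t (Fin.castAdd k i) with hxdef
    have hx0 : x 0 = x₀ := by funext i; simp [hxdef, hx₀def, hz0]
    have hx : ∀ t : ℝ, 0 ≤ t → HasDerivAt x (f (x t)) t := by
      intro t ht
      apply hasDerivAt_pi.mpr
      intro i
      have h1 := hasDerivAt_pi.mp (hz t ht) (Fin.castAdd k i)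
      rw [hF] at h1
      rw [Fin.append_left] at h1
      exact h1
    have Hx := Hsol x₀ x hx0 hx
    set y : ℝ → Fin (n + m) → ℝ :=
      fun t => (NormedSpace.exp (t • A)).mulVec (Fin.append x₀ (p x₀)) with hydef
    have hy : ∀ t, HasDerivAt y (A.mulVec (y t)) t := by
      intro t
      have h1 := exp_mulVec_hasDerivAt A (Fin.append x₀ (p x₀)) t
      rw [exp_smul_comm, ← Matrix.mulVec_mulVec] at h1
      exact h1
    have hyx : ∀ t, 0 ≤ t → ∀ i, y t (Fin.castAdd m i) = x t i := fun t ht i => Hx t ht i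
    have hMd : ∀ (t : ℝ) (α : I), HasDerivAt (fun s => mono (y s) α)
        ((monoMat A D).mulVec (fun β => mono (y t) β) α) t :=
      fun t α => mono_hasDerivAt A y hy t α
    have hMc : ∀ α : I, Continuous fun s => mono (y s) α := fun α =>
      continuous_iff_continuousAt.mpr fun t => (hMd t α).continuousAt
    have hHc : ∀ j, Continuous fun s => ∑ β : I, cg j β * mono (y s) β := fun j =>
      continuous_finset_sum _ fun β _ => continuous_const.mul (hMc β)
    set U : ℝ → ((Fin n ⊕ Fin k) ⊕ I) → ℝ := fun t r =>
      Sum.casesOn r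
        (fun rc => Sum.casesOn rc
          (fun i => mono (y t) (deltaIdx (D := D) (Fin.castAdd m i)))
          (fun j => z₀ (Fin.natAdd n j) + ∫ s in (0:ℝ)..t, ∑ β : I, cg j β * mono (y s) β))
        (fun α => mono (y t) α) with hUdef
    have hBrow : ∀ (v : ((Fin n ⊕ Fin k) ⊕ I) → ℝ) r,
        B.mulVec v r = ∑ β : I, B r (Sum.inr β) * v (Sum.inr β) := by
      intro v r
      show ∑ c, B r c * v c = _
      rw [Fintype.sum_sum_type]
      have hz' : ∀ c : Fin n ⊕ Fin k, B r (Sum.inl c) * v (Sum.inl c) = 0 := by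
        intro c; show (0 : ℝ) * v (Sum.inl c) = 0; ring
      rw [Finset.sum_congr rfl fun c _ => hz' c, Finset.sum_const_zero, zero_add]
    have hU : ∀ t, HasDerivAt U (B.mulVec (U t)) t := by
      intro t
      apply hasDerivAt_pi.mpr
      rintro ((i | j) | α)
      · have h2 : B.mulVec (U t) (Sum.inl (Sum.inl i))
            = (monoMat A D).mulVec (fun β => mono (y t) β)
              (deltaIdx (D := D) (Fin.castAdd m i)) := by
          rw [hBrow]; try rfl
        rw [h2]
        exact hMd t (deltaIdx (D := D) (Fin.castAdd m i))
      · have h1 : HasDerivAt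
            (fun s => z₀ (Fin.natAdd n j) + ∫ r in (0:ℝ)..s, ∑ β : I, cg j β * mono (y r) β)
            (∑ β : I, cg j β * mono (y t) β) t :=
          (((hHc j).integral_hasStrictDerivAt 0 t).hasDerivAt).const_add _
        have h2 : B.mulVec (U t) (Sum.inl (Sum.inr j)) = ∑ β : I, cg j β * mono (y t) β := by
          rw [hBrow]; try rfl
        rw [h2]
        exact h1
      · have h2 : B.mulVec (U t) (Sum.inr α)
            = (monoMat A D).mulVec (fun β => mono (y t) β) α := by
          rw [hBrow]; try rfl
        rw [h2]
        exact hMd t α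
    have huniq : ∀ t, U t = (NormedSpace.exp (t • B)).mulVec (U 0) :=
      fun t => linear_ode_unique B U hU t
    have hy0 : y 0 = Fin.append x₀ (p x₀) := by
      rw [hydef]
      simp only [zero_smul]
      rw [matrix_exp_zero, Matrix.one_mulVec]
    have hU0 : U 0 = (Fin.append z₀ (q z₀)) ∘ σ := by
      funext r
      rcases r with ((i | j) | α)
      · have hσ : σ (Sum.inl (Sum.inl i)) = Fin.castAdd k' (Fin.castAdd k i) := by
          simp [σ, finSumFinEquiv_apply_left]
        show mono (y 0) (deltaIdx (D := D) (Fin.castAdd m i))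
          = Fin.append z₀ (q z₀) (σ (Sum.inl (Sum.inl i)))
        rw [hσ, Fin.append_left, hy0, mono_deltaIdx hD1, Fin.append_left]
      · have hσ : σ (Sum.inl (Sum.inr j)) = Fin.castAdd k' (Fin.natAdd n j) := by
          simp [σ, finSumFinEquiv_apply_left, finSumFinEquiv_apply_right]
        show z₀ (Fin.natAdd n j) + (∫ s in (0:ℝ)..(0:ℝ), ∑ β : I, cg j β * mono (y s) β)
          = Fin.append z₀ (q z₀) (σ (Sum.inl (Sum.inr j)))
        rw [intervalIntegral.integral_same, add_zero, hσ, Fin.append_left]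
      · have hσ : σ (Sum.inr α) = Fin.natAdd (n + k) (eI α) := by
          simp [σ, finSumFinEquiv_apply_right]
        show mono (y 0) α = Fin.append z₀ (q z₀) (σ (Sum.inr α))
        rw [hσ, Fin.append_right, hy0]
        show mono (Fin.append x₀ (p x₀)) α
          = mono (Fin.append (fun i => z₀ (Fin.castAdd k i))
              (p fun i => z₀ (Fin.castAdd k i))) (eI.symm (eI α))
        rw [Equiv.symm_apply_apply]
    intro t ht c
    have hsmul : t • Matrix.reindex σ σ B = Matrix.reindex σ σ (t • B) := by
      ext i j
      simp [Matrix.reindex_apply]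
    rw [hsmul, exp_reindex, Matrix.reindex_apply, Matrix.submatrix_mulVec_equiv]
    have hVσ : (Fin.append z₀ (q z₀)) ∘ (σ.symm.symm) = U 0 := by
      rw [Equiv.symm_symm, ← hU0]
    show ((NormedSpace.exp (t • B)).mulVec ((Fin.append z₀ (q z₀)) ∘ σ.symm.symm))
      (σ.symm (Fin.castAdd k' c)) = z t c
    rw [hVσ, ← huniq t]
    refine Fin.addCases (motive := fun c => U t (σ.symm (Fin.castAdd k' c)) = z t c)
      (fun i => ?_) (fun j => ?_) c
    · beta_reduce
      have hσi : σ.symm (Fin.castAdd k' (Fin.castAdd k i)) = Sum.inl (Sum.inl i) := by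
        rw [Equiv.symm_apply_eq]
        simp [σ, finSumFinEquiv_apply_left]
      rw [hσi]
      show mono (y t) (deltaIdx (D := D) (Fin.castAdd m i)) = z t (Fin.castAdd k i)
      rw [mono_deltaIdx hD1, hyx t ht i]
    · beta_reduce
      have hσj : σ.symm (Fin.castAdd k' (Fin.natAdd n j)) = Sum.inl (Sum.inr j) := by
        rw [Equiv.symm_apply_eq]
        simp [σ, finSumFinEquiv_apply_left, finSumFinEquiv_apply_right]
      rw [hσj]
      show z₀ (Fin.natAdd n j) + (∫ s in (0:ℝ)..t, ∑ β : I, cg j β * mono (y s) β)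
        = z t (Fin.natAdd n j)
      have hHg : ∀ s, 0 ≤ s → (∑ β : I, cg j β * mono (y s) β) = g (x s) j := by
        intro s hs
        have h1 : MvPolynomial.eval (y s) (MvPolynomial.rename (Fin.castAdd m) (Q j))
            = ∑ β : I, cg j β * mono (y s) β :=
          eval_eq_sum_mono _ (hQD j) (y s)
        rw [← h1, MvPolynomial.eval_rename]
        have h2 : (y s ∘ Fin.castAdd m) = x s := funext fun i => hyx s hs i
        rw [h2]
        exact (hQ (x s) j).symm
      set W : ℝ → ℝ := fun s => z s (Fin.natAdd n j)
        - (z₀ (Fin.natAdd n j) + ∫ r in (0:ℝ)..s, ∑ β : I, cg j β * mono (y r) β) with hWdef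
      have hWd : ∀ s, 0 ≤ s → HasDerivAt W 0 s := by
        intro s hs
        have h1 : HasDerivAt (fun r => z r (Fin.natAdd n j)) (g (x s) j) s := by
          have h2 := hasDerivAt_pi.mp (hz s hs) (Fin.natAdd n j)
          rw [hF] at h2
          rw [Fin.append_right] at h2
          exact h2
        have h3 : HasDerivAt
            (fun r => z₀ (Fin.natAdd n j) + ∫ u in (0:ℝ)..r, ∑ β : I, cg j β * mono (y u) β)
            (∑ β : I, cg j β * mono (y s) β) s :=
          (((hHc j).integral_hasStrictDerivAt 0 s).hasDerivAt).const_add _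
        have h4 := h1.sub h3
        rw [hHg s hs, sub_self] at h4
        exact h4
      have hWc : ContinuousOn W (Set.Icc 0 t) :=
        fun s hs => ((hWd s hs.1).continuousAt).continuousWithinAt
      have hconst := constant_of_has_deriv_right_zero hWc
        (fun s hs => ((hWd s hs.1).hasDerivWithinAt)) t (Set.right_mem_Icc.mpr ht)
      have hW0 : W 0 = 0 := by
        rw [hWdef]
        simp [intervalIntegral.integral_same, hz0]
      rw [hW0] at hconst
      have h5 := sub_eq_zero.mp hconst
      exact h5.symm
end

section
/- Let f : ℝⁿ → ℝⁿ be a super-linearizable polynomial vector field and let P ∈ ℝ^{n×n} be an invertible matrix. Then the polynomial vector field z ↦ P f(P⁻¹ z) is super-linearizable. -/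
open Matrix MvPolynomial

/-- Super-linearizability is preserved under invertible linear changes of variables:
if `f` is super-linearizable and `P` is invertible, then `z ↦ P f(P⁻¹ z)` is
super-linearizable. -/
theorem superlinearizable_linear_change {n : ℕ}
    (f : (Fin n → ℝ) → (Fin n → ℝ))
    (hfpoly : IsPolyMap f) (hfsl : IsSuperLinearizable f)
    (P : Matrix (Fin n) (Fin n) ℝ) (hP : IsUnit P.det) :
    IsSuperLinearizable (fun z => P.mulVec (f (P⁻¹.mulVec z))) := by
  obtain ⟨k, A, p, ⟨Pp, hPp⟩, hsol⟩ := hfsl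
  have hPPi : P * P⁻¹ = 1 := Matrix.mul_nonsing_inv P hP
  have hPiP : P⁻¹ * P = 1 := Matrix.nonsing_inv_mul P hP
  set e : Fin n ⊕ Fin k ≃ Fin (n + k) := finSumFinEquiv with he
  set Q : Matrix (Fin (n + k)) (Fin (n + k)) ℝ :=
    Matrix.reindexAlgEquiv ℝ ℝ e (fromBlocks P 0 0 1) with hQ
  set Qi : Matrix (Fin (n + k)) (Fin (n + k)) ℝ :=
    Matrix.reindexAlgEquiv ℝ ℝ e (fromBlocks P⁻¹ 0 0 1) with hQi
  have hQQi : Q * Qi = 1 := by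
    rw [hQ, hQi, ← _root_.map_mul, Matrix.fromBlocks_multiply]
    simp [hPPi, Matrix.fromBlocks_one, Matrix.submatrix_one_equiv]
  have hQiQ : Qi * Q = 1 := by
    rw [hQ, hQi, ← _root_.map_mul, Matrix.fromBlocks_multiply]
    simp [hPiP, Matrix.fromBlocks_one, Matrix.submatrix_one_equiv]
  set U : (Matrix (Fin (n + k)) (Fin (n + k)) ℝ)ˣ := ⟨Q, Qi, hQQi, hQiQ⟩ with hU
  have heq : ∀ (N : ℕ) (y : Fin N → ℝ) (φ : MvPolynomial (Fin N) ℝ),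
      MvPolynomial.eval y φ = MvPolynomial.aeval (R := ℝ) y φ := by
    intro N y φ
    rw [MvPolynomial.aeval_def, Algebra.algebraMap_self, MvPolynomial.eval₂_id]
  -- the new data
  refine ⟨k, Q * A * Qi, fun z => p (P⁻¹.mulVec z), ?_, ?_⟩
  · -- polynomial map
    refine ⟨fun i => bind₁ (fun l => ∑ m, MvPolynomial.C (P⁻¹ l m) * MvPolynomial.X m) (Pp i), ?_⟩
    intro z i
    show p (P⁻¹.mulVec z) i = _
    rw [hPp, heq, heq, aeval_bind₁]
    have h5 : P⁻¹.mulVec z = fun l =>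
        MvPolynomial.aeval (R := ℝ) z (∑ m, MvPolynomial.C (P⁻¹ l m) * MvPolynomial.X m) := by
      funext l
      simp [Matrix.mulVec, dotProduct, map_sum, Algebra.algebraMap_self]
    rw [h5]
  · -- the ODE property
    intro z₀ z hz0 hz
    set x : ℝ → Fin n → ℝ := fun s => P⁻¹.mulVec (z s) with hx
    set x₀ : Fin n → ℝ := P⁻¹.mulVec z₀ with hx₀
    have hx0 : x 0 = x₀ := by
      show P⁻¹.mulVec (z 0) = x₀
      rw [hz0]
    have hxode : ∀ t : ℝ, 0 ≤ t → HasDerivAt x (f (x t)) t := by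
      intro t ht
      have hc := (LinearMap.toContinuousLinearMap
        (Matrix.mulVecLin (P⁻¹ : Matrix (Fin n) (Fin n) ℝ))).hasFDerivAt.comp_hasDerivAt
        t (hz t ht)
      simpa [hx, Function.comp_def, LinearMap.coe_toContinuousLinearMap',
        Matrix.mulVecLin_apply, Matrix.mulVec_mulVec, hPiP, Matrix.one_mulVec] using hc
    have key := hsol x₀ x hx0 hxode
    intro t ht i
    -- compute exp of the conjugated matrix
    have hsm : t • (Q * A * Qi) = Q * (t • A) * Qi := by
      rw [← smul_mul_assoc, ← mul_smul_comm]
    have hexp : NormedSpace.exp (t • (Q * A * Qi)) = Q * NormedSpace.exp (t • A) * Qi := by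
      rw [hsm]
      exact Matrix.exp_units_conj U (t • A)
    -- compute the initial vector after Qi
    have hQiv : Qi.mulVec (Fin.append z₀ (p (P⁻¹.mulVec z₀))) = Fin.append x₀ (p x₀) := by
      have hcomp : (Fin.append z₀ (p (P⁻¹.mulVec z₀))) ∘ e = Sum.elim z₀ (p x₀) := by
        funext s
        cases s with
        | inl j => simp [he, hx₀, Fin.append_left]
        | inr j => simp [he, hx₀, Fin.append_right]
      have h2 : Qi.mulVec (Fin.append z₀ (p (P⁻¹.mulVec z₀)))
          = ((fromBlocks P⁻¹ 0 0 (1 : Matrix (Fin k) (Fin k) ℝ)).mulVec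
              (Sum.elim z₀ (p x₀))) ∘ e.symm := by
        rw [hQi, Matrix.reindexAlgEquiv_apply, Matrix.reindex_apply,
          Matrix.submatrix_mulVec_equiv]
        simp [hcomp]
      rw [h2, Matrix.fromBlocks_mulVec]
      funext i
      refine Fin.addCases (fun j => ?_) (fun j => ?_) i
      · simp [he, Fin.append_left, hx₀]
      · simp [he, Fin.append_right]
    show (NormedSpace.exp (t • (Q * A * Qi)) *ᵥ
        Fin.append z₀ (p (P⁻¹.mulVec z₀))) (Fin.castAdd k i) = z t i
    rw [hexp, Matrix.mul_assoc, ← Matrix.mulVec_mulVec, ← Matrix.mulVec_mulVec, hQiv]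
    set u : Fin (n + k) → ℝ := (NormedSpace.exp (t • A)).mulVec (Fin.append x₀ (p x₀)) with hu2
    have hux : ∀ j : Fin n, u (Fin.castAdd k j) = x t j := fun j => key t ht j
    have hQu : Q.mulVec u (Fin.castAdd k i) = P.mulVec (fun j => u (Fin.castAdd k j)) i := by
      rw [hQ, Matrix.reindexAlgEquiv_apply, Matrix.reindex_apply, Matrix.submatrix_mulVec_equiv]
      have h3 : u ∘ e = Sum.elim (fun j => u (Fin.castAdd k j)) (fun j => u (Fin.natAdd n j)) := by
        funext s
        cases s with
        | inl j => simp [he]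
        | inr j => simp [he]
      simp [h3, Matrix.fromBlocks_mulVec, he]
      rfl
    rw [hQu]
    have h4 : (fun j => u (Fin.castAdd k j)) = x t := funext hux
    rw [h4, hx]
    simp [Matrix.mulVec_mulVec, hPPi, Matrix.one_mulVec]
end

section
/- Let f : ℝⁿ → ℝⁿ be a super-linearizable polynomial vector field and let φ(x) = Ax + b be an affine automorphism of ℝⁿ (A ∈ ℝ^{n×n} invertible, b ∈ ℝⁿ). Then the transformed polynomial vector field h(y) = A f(A⁻¹(y − b)) (the dynamics of y = φ(x) when ẋ = f(x)) is super-linearizable. -/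
open Matrix MvPolynomial

section Helpers

open NormedSpace

variable {a b' : Type*} [Fintype a] [DecidableEq a] [Fintype b'] [DecidableEq b']

lemma fromBlocks_zero_pow (X : Matrix a a ℝ) (Y : Matrix b' b' ℝ) (m : ℕ) :
    (fromBlocks X 0 0 Y) ^ m = fromBlocks (X ^ m) 0 0 (Y ^ m) := by
  induction m with
  | zero => simp [pow_zero]
  | succ m ih => rw [pow_succ, ih, fromBlocks_multiply]; simp [pow_succ]

lemma exp_fromBlocks (X : Matrix a a ℝ) (Y : Matrix b' b' ℝ) :
    exp (fromBlocks X 0 0 Y) = fromBlocks (exp X) 0 0 (exp Y) := by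
  letI : SeminormedRing (Matrix a a ℝ) := Matrix.linftyOpSemiNormedRing
  letI : NormedRing (Matrix a a ℝ) := Matrix.linftyOpNormedRing
  letI : NormedAlgebra ℝ (Matrix a a ℝ) := Matrix.linftyOpNormedAlgebra
  letI : SeminormedRing (Matrix b' b' ℝ) := Matrix.linftyOpSemiNormedRing
  letI : NormedRing (Matrix b' b' ℝ) := Matrix.linftyOpNormedRing
  letI : NormedAlgebra ℝ (Matrix b' b' ℝ) := Matrix.linftyOpNormedAlgebra
  have hX := exp_series_hasSum_exp' (𝕂 := ℝ) X
  have hY := exp_series_hasSum_exp' (𝕂 := ℝ) Y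
  have hφ : ∀ P Q : Matrix a a ℝ × Matrix b' b' ℝ,
      fromBlocks (P + Q).1 (0 : Matrix a b' ℝ) 0 (P + Q).2
        = fromBlocks P.1 0 0 P.2 + fromBlocks Q.1 0 0 Q.2 := by
    intro P Q
    rw [fromBlocks_add]
    simp
  have hcont : Continuous (fun P : Matrix a a ℝ × Matrix b' b' ℝ =>
      fromBlocks P.1 (0 : Matrix a b' ℝ) 0 P.2) :=
    continuous_fst.matrix_fromBlocks continuous_const continuous_const continuous_snd
  have hsum := ((hX.prodMk hY).map
    (AddMonoidHom.mk' (fun P : Matrix a a ℝ × Matrix b' b' ℝ =>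
      fromBlocks P.1 (0 : Matrix a b' ℝ) 0 P.2) hφ) hcont)
  have hfun : (fun m : ℕ => ((m.factorial : ℝ)⁻¹) • fromBlocks X (0 : Matrix a b' ℝ) 0 Y ^ m)
      = fun m : ℕ => fromBlocks (((m.factorial : ℝ)⁻¹) • X ^ m) (0 : Matrix a b' ℝ) 0
          (((m.factorial : ℝ)⁻¹) • Y ^ m) := by
    funext m
    rw [fromBlocks_zero_pow, fromBlocks_smul]
    simp
  rw [exp_eq_tsum (𝕂 := ℝ)]
  show (∑' m : ℕ, ((m.factorial : ℝ)⁻¹) • fromBlocks X (0 : Matrix a b' ℝ) 0 Y ^ m) = _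
  rw [hfun]
  exact hsum.tsum_eq

lemma exp_reindex_s7 (e : a ≃ b') (M : Matrix a a ℝ) :
    exp ((reindex e e) M) = reindex e e (exp M) := by
  letI : SeminormedRing (Matrix a a ℝ) := Matrix.linftyOpSemiNormedRing
  letI : NormedRing (Matrix a a ℝ) := Matrix.linftyOpNormedRing
  letI : NormedAlgebra ℝ (Matrix a a ℝ) := Matrix.linftyOpNormedAlgebra
  letI : SeminormedRing (Matrix b' b' ℝ) := Matrix.linftyOpSemiNormedRing
  letI : NormedRing (Matrix b' b' ℝ) := Matrix.linftyOpNormedRing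
  letI : NormedAlgebra ℝ (Matrix b' b' ℝ) := Matrix.linftyOpNormedAlgebra
  have hc : Continuous (reindexAlgEquiv ℝ ℝ e) := by
    show Continuous fun M : Matrix a a ℝ => reindex e e M
    exact continuous_id.matrix_reindex e e
  letI : NormedAlgebra ℚ (Matrix a a ℝ) := Matrix.linftyOpNormedAlgebra
  letI : NormedAlgebra ℚ (Matrix b' b' ℝ) := Matrix.linftyOpNormedAlgebra
  exact (map_exp (reindexAlgEquiv ℝ ℝ e) hc M).symm

lemma append_elim {α : Type*} {m r : ℕ} (u : Fin m → α) (v : Fin r → α) (s : Fin m ⊕ Fin r) :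
    Fin.append u v (finSumFinEquiv s) = Sum.elim u v s := by
  cases s with
  | inl j => simp
  | inr j => simp

end Helpers

set_option maxRecDepth 8000 in
/-- Super-linearizability is preserved under affine automorphisms: if `f` is
super-linearizable and `φ(x) = Ax + b` with `A` invertible, then
`h(y) = A f(A⁻¹(y − b))` is super-linearizable. -/
theorem superlinearizable_affine_change {n : ℕ}
    (f : (Fin n → ℝ) → (Fin n → ℝ))
    (hfpoly : IsPolyMap f) (hfsl : IsSuperLinearizable f)
    (A : Matrix (Fin n) (Fin n) ℝ) (hA : IsUnit A.det) (b : Fin n → ℝ) :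
    IsSuperLinearizable (fun y => A.mulVec (f (A⁻¹.mulVec (y - b)))) := by
  classical
  obtain ⟨k, M, p, hp, H⟩ := hfsl
  -- block matrices over `Fin (n+k) ⊕ Fin 1`
  set Ah : Matrix (Fin (n + k)) (Fin (n + k)) ℝ :=
    (fromBlocks A 0 0 (1 : Matrix (Fin k) (Fin k) ℝ)).submatrix
      finSumFinEquiv.symm finSumFinEquiv.symm with hAhdef
  set bh : Matrix (Fin (n + k)) (Fin 1) ℝ :=
    Matrix.of (fun i _ => Fin.append b (0 : Fin k → ℝ) i) with hbhdef
  set S : Matrix (Fin (n + k) ⊕ Fin 1) (Fin (n + k) ⊕ Fin 1) ℝ :=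
    fromBlocks Ah bh 0 1 with hSdef
  set D : Matrix (Fin (n + k) ⊕ Fin 1) (Fin (n + k) ⊕ Fin 1) ℝ :=
    fromBlocks M 0 0 0 with hDdef
  have hAh : IsUnit Ah.det := by
    rw [hAhdef]
    rw [det_submatrix_equiv_self, det_fromBlocks_zero₂₁]
    simpa using hA
  have hSdet : IsUnit S.det := by
    rw [hSdef, det_fromBlocks_zero₂₁]
    simpa using hAh
  have hSunit : IsUnit S := (isUnit_iff_isUnit_det S).mpr hSdet
  set e : Fin (n + k) ⊕ Fin 1 ≃ Fin (n + (k + 1)) := finSumFinEquiv with hedef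
  refine ⟨k + 1, (S * D * S⁻¹).submatrix e.symm e.symm,
    fun y => Fin.append (p (A⁻¹.mulVec (y - b))) ![(1 : ℝ)], ?_, ?_⟩
  · -- polynomiality
    obtain ⟨P, hPev⟩ := hp
    set L : Fin n → MvPolynomial (Fin n) ℝ :=
      fun j => ∑ l, MvPolynomial.C (A⁻¹ j l) * (MvPolynomial.X l - MvPolynomial.C (b l)) with hL
    have hLev : ∀ (y : Fin n → ℝ) (j : Fin n),
        MvPolynomial.eval y (L j) = A⁻¹.mulVec (y - b) j := by
      intro y j
      have h1 : MvPolynomial.eval y (L j) = ∑ l, A⁻¹ j l * (y l - b l) := by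
        rw [hL]
        simp only [map_sum, _root_.map_mul, _root_.map_sub, MvPolynomial.eval_C, MvPolynomial.eval_X]
      rw [h1]
      simp [Matrix.mulVec, dotProduct]
    refine ⟨Fin.append (fun i => MvPolynomial.bind₁ L (P i))
      ![(1 : MvPolynomial (Fin n) ℝ)], ?_⟩
    intro y i
    show Fin.append (p (A⁻¹.mulVec (y - b))) ![(1 : ℝ)] i = _
    refine Fin.addCases (fun i => ?_) (fun i => ?_) i
    · rw [Fin.append_left, Fin.append_left, hPev]
      have key : MvPolynomial.eval y (MvPolynomial.bind₁ L (P i))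
          = MvPolynomial.eval (fun j => MvPolynomial.eval y (L j)) (P i) :=
        MvPolynomial.eval₂Hom_bind₁ (RingHom.id ℝ) y L (P i)
      rw [key]
      have h2 : (fun j => MvPolynomial.eval y (L j)) = A⁻¹.mulVec (y - b) :=
        funext fun j => hLev y j
      rw [h2]
    · rw [Fin.append_right, Fin.append_right]
      fin_cases i <;> simp
  · -- the dynamics
    intro y₀ y hy0 hy' t ht i
    set x₀ : Fin n → ℝ := A⁻¹.mulVec (y₀ - b) with hx₀def
    set x : ℝ → Fin n → ℝ := fun s => A⁻¹.mulVec (y s - b) with hxdef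
    have hAiA : A⁻¹ * A = 1 := nonsing_inv_mul A hA
    have hAAi : A * A⁻¹ = 1 := mul_nonsing_inv A hA
    have hx0 : x 0 = x₀ := by simp only [hxdef]; rw [hy0]
    have hx' : ∀ s : ℝ, 0 ≤ s → HasDerivAt x (f (x s)) s := by
      intro s hs
      have h1 : HasDerivAt (fun u => y u - b)
          (A.mulVec (f (A⁻¹.mulVec (y s - b)))) s := (hy' s hs).sub_const b
      have h2 := ((Matrix.mulVecLin
        (A⁻¹ : Matrix (Fin n) (Fin n) ℝ)).toContinuousLinearMap).hasFDerivAt.comp_hasDerivAt s h1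
      have h3 : HasDerivAt x ((Matrix.mulVecLin A⁻¹).toContinuousLinearMap
          (A.mulVec (f (A⁻¹.mulVec (y s - b))))) s := h2
      simpa [hxdef, Matrix.mulVec_mulVec, hAiA] using h3
    -- abbreviations
    set v₀ : Fin (n + k) → ℝ := Fin.append x₀ (p x₀) with hv₀def
    set Et : Matrix (Fin (n + k)) (Fin (n + k)) ℝ := NormedSpace.exp (t • M) with hEtdef
    -- the exponential identity
    have hexp : NormedSpace.exp (t • ((S * D * S⁻¹).submatrix e.symm e.symm))
        = (S * (fromBlocks Et 0 0 1) * S⁻¹).submatrix e.symm e.symm := by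
      have h1 : t • ((S * D * S⁻¹).submatrix e.symm e.symm)
          = (reindex e e) (t • (S * D * S⁻¹)) := by
        rw [reindex_apply]
        ext i j
        simp
      rw [h1, exp_reindex_s7, reindex_apply]
      congr 1
      have h2 : t • (S * D * S⁻¹) = S * (t • D) * S⁻¹ := by
        rw [← smul_mul_assoc, ← mul_smul_comm]
      rw [h2, Matrix.exp_conj S (t • D) hSunit]
      have h3 : t • D = fromBlocks (t • M) 0 0 (0 : Matrix (Fin 1) (Fin 1) ℝ) := by
        rw [hDdef, fromBlocks_smul]
        simp
      rw [h3, exp_fromBlocks, NormedSpace.exp_zero, hEtdef]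
    rw [hexp, submatrix_mulVec_equiv]
    -- the initial vector transported along `e`
    have happ3 : ∀ j : Fin (n + (k + 1)),
        Fin.append y₀ (Fin.append (p x₀) ![(1:ℝ)]) j
          = Fin.append (Fin.append y₀ (p x₀)) ![(1:ℝ)] j := by
      intro j
      rw [Fin.append_assoc]
      rfl
    have hw : (Fin.append y₀ (Fin.append (p x₀) ![(1:ℝ)])) ∘ ⇑e
        = Sum.elim (Fin.append y₀ (p x₀)) ![(1:ℝ)] := by
      funext s
      show Fin.append y₀ (Fin.append (p x₀) ![(1:ℝ)]) (e s) = _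
      rw [happ3]
      exact append_elim _ _ s
    have hwgoal : (fun y' => Fin.append (p (A⁻¹.mulVec (y' - b))) ![(1:ℝ)]) y₀
        = Fin.append (p x₀) ![(1:ℝ)] := by rw [hx₀def]
    rw [hwgoal]
    simp only [Equiv.symm_symm]
    rw [hw]
    -- compute the action of `Ah`
    have hAh_l : ∀ (v : Fin (n + k) → ℝ) (i : Fin n),
        (Ah *ᵥ v) (Fin.castAdd k i) = A.mulVec (fun j => v (Fin.castAdd k j)) i := by
      intro v i
      rw [hAhdef, submatrix_mulVec_equiv]
      show ((fromBlocks A 0 0 (1 : Matrix (Fin k) (Fin k) ℝ)) *ᵥ (v ∘ ⇑finSumFinEquiv))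
        (finSumFinEquiv.symm (Fin.castAdd k i)) = _
      rw [finSumFinEquiv_symm_apply_castAdd, fromBlocks_mulVec]
      simp only [Sum.elim_inl, Pi.add_apply, Matrix.zero_mulVec, Pi.zero_apply, add_zero]
      rfl
    have hAh_r : ∀ (v : Fin (n + k) → ℝ) (i : Fin k),
        (Ah *ᵥ v) (Fin.natAdd n i) = v (Fin.natAdd n i) := by
      intro v i
      rw [hAhdef, submatrix_mulVec_equiv]
      show ((fromBlocks A 0 0 (1 : Matrix (Fin k) (Fin k) ℝ)) *ᵥ (v ∘ ⇑finSumFinEquiv))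
        (finSumFinEquiv.symm (Fin.natAdd n i)) = _
      rw [finSumFinEquiv_symm_apply_natAdd, fromBlocks_mulVec]
      simp [Matrix.one_mulVec]
    have hbh : ∀ (c : Fin 1 → ℝ) (j : Fin (n + k)),
        (bh *ᵥ c) j = Fin.append b (0 : Fin k → ℝ) j * c 0 := by
      intro c j
      simp [hbhdef, Matrix.mulVec, dotProduct]
    -- S sends (x₀, p x₀, 1) to (y₀, p x₀, 1)
    have hSu : S *ᵥ (Sum.elim v₀ ![(1:ℝ)]) = Sum.elim (Fin.append y₀ (p x₀)) ![(1:ℝ)] := by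
      rw [hSdef, fromBlocks_mulVec]
      have hil : (Sum.elim v₀ ![(1:ℝ)]) ∘ Sum.inl = v₀ := rfl
      have hir : (Sum.elim v₀ ![(1:ℝ)]) ∘ Sum.inr = ![(1:ℝ)] := rfl
      rw [hil, hir]
      funext s
      cases s with
      | inl j =>
        simp only [Sum.elim_inl, Pi.add_apply]
        refine Fin.addCases (fun i' => ?_) (fun i' => ?_) j
        · rw [hAh_l, hbh]
          have h4 : (fun j => v₀ (Fin.castAdd k j)) = x₀ := by
            funext j'; rw [hv₀def, Fin.append_left]
          rw [h4, Fin.append_left, Fin.append_left]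
          have h5 : A.mulVec x₀ = y₀ - b := by
            rw [hx₀def, Matrix.mulVec_mulVec, hAAi, Matrix.one_mulVec]
          rw [h5]
          simp
        · rw [hAh_r, hbh, hv₀def, Fin.append_right, Fin.append_right, Fin.append_right]
          simp
      | inr j =>
        simp [Matrix.one_mulVec, Matrix.zero_mulVec]
    have hSinv : S⁻¹ *ᵥ (Sum.elim (Fin.append y₀ (p x₀)) ![(1:ℝ)]) = Sum.elim v₀ ![(1:ℝ)] := by
      rw [← hSu, Matrix.mulVec_mulVec, nonsing_inv_mul S hSdet, Matrix.one_mulVec]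
    -- final computation
    have hmul : (S * (fromBlocks Et 0 0 1) * S⁻¹) *ᵥ (Sum.elim (Fin.append y₀ (p x₀)) ![(1:ℝ)])
        = S *ᵥ ((fromBlocks Et 0 0 1) *ᵥ (Sum.elim v₀ ![(1:ℝ)])) := by
      rw [← Matrix.mulVec_mulVec, ← Matrix.mulVec_mulVec, hSinv]
    rw [hmul]
    have hFu : (fromBlocks Et 0 0 (1 : Matrix (Fin 1) (Fin 1) ℝ)) *ᵥ (Sum.elim v₀ ![(1:ℝ)])
        = Sum.elim (Et *ᵥ v₀) ![(1:ℝ)] := by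
      rw [fromBlocks_mulVec]
      have hil : (Sum.elim v₀ ![(1:ℝ)]) ∘ Sum.inl = v₀ := rfl
      have hir : (Sum.elim v₀ ![(1:ℝ)]) ∘ Sum.inr = ![(1:ℝ)] := rfl
      rw [hil, hir]
      funext s
      cases s with
      | inl j => simp [Matrix.zero_mulVec]
      | inr j => simp [Matrix.one_mulVec, Matrix.zero_mulVec]
    rw [hFu]
    have he : e.symm (Fin.castAdd (k + 1) i) = Sum.inl (Fin.castAdd k i) := by
      have h6 : e (Sum.inl (Fin.castAdd k i)) = Fin.castAdd (k + 1) i := by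
        exact Fin.ext rfl
      rw [← h6, Equiv.symm_apply_apply]
    show (S *ᵥ Sum.elim (Et *ᵥ v₀) ![(1:ℝ)]) (e.symm (Fin.castAdd (k + 1) i)) = y t i
    rw [he, hSdef, fromBlocks_mulVec]
    have hil : (Sum.elim (Et *ᵥ v₀) ![(1:ℝ)]) ∘ Sum.inl = Et *ᵥ v₀ := rfl
    have hir : (Sum.elim (Et *ᵥ v₀) ![(1:ℝ)]) ∘ Sum.inr = ![(1:ℝ)] := rfl
    rw [hil, hir]
    simp only [Sum.elim_inl, Pi.add_apply]
    rw [hAh_l, hbh, Fin.append_left]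
    have hxt : (fun j => (Et *ᵥ v₀) (Fin.castAdd k j)) = x t := by
      funext j
      rw [hEtdef, hv₀def]
      exact H x₀ x hx0 hx' t ht j
    rw [hxt]
    have h5 : A.mulVec (x t) = y t - b := by
      rw [hxdef, Matrix.mulVec_mulVec, hAAi, Matrix.one_mulVec]
    rw [h5]
    simp
end
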